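/- arXiv:1606.04021 — 3 statements merged into one kernel-verified Lean document; each statement's English description precedes it below -/
import Mathlib

section
/- Let G be a finite simple graph containing two cycles: C with vertices A_1,…,A_n (edges {A_i,A_{i+1}} for i = 1,…,n−1 and {A_n,A_1}) and C' with vertices A'_1,…,A'_m (edges {A'_i,A'_{i+1}} for i = 1,…,m−1 and {A'_m,A'_1}), where n, m ≥ 4, such that C and C' share at least 2 common vertices and no common edges. Suppose the multiset of the n + m cycle edges can be partitioned into two sets F_1 and F_2 such that, for j = 1, 2: the edges of F_j form a single cycle in G of length at least 4; F_j contains exactly one of the two edges {A_n,A_1} and {A'_m,A'_1}; and the subgraph of G induced on the vertices of F_j is chordal. Then every no-disturbance model on G with outcomes in {−1,+1} satisfies I(n) + I(m) ≤ n + m − 4, where I(n) = Σ_{i=1}^{n−1} ⟨A_iA_{i+1}⟩ − ⟨A_nA_1⟩ and I(m) = Σ_{i=1}^{m−1} ⟨A'_iA'_{i+1}⟩ − ⟨A'_mA'_1⟩. -/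
/-- The two-element set of outcomes `{−1, +1}` (as a subtype of `ℤ`). -/
abbrev Sgn : Type := ({-1, 1} : Finset ℤ)

instance : Nonempty Sgn := ⟨⟨1, by decide⟩⟩

/-- A finite simple graph is *chordal* if every cycle of length at least 4 has a
chord, i.e. an edge of the graph joining two vertices of the cycle that are not
consecutive on the cycle. -/
def SimpleGraph.IsChordal {W : Type*} (G : SimpleGraph W) : Prop :=
  ∀ (v : W) (c : G.Walk v v), c.IsCycle → 4 ≤ c.length →
    ∃ u w : W, u ∈ c.support ∧ w ∈ c.support ∧ G.Adj u w ∧ ¬ c.toSubgraph.Adj u w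

/-- A *no-disturbance model* with outcomes in `{−1,+1}` on a finite simple graph `G`
assigns to each clique `C` of `G` a probability distribution `p C` on the functions
`C → {−1,+1}`, such that whenever `C ⊆ D` are cliques, `p C` is the marginal of
`p D`. -/
structure NDModel {V : Type*} [Fintype V] [DecidableEq V] (G : SimpleGraph V) where
  p : (C : Finset V) → (C → Sgn) → ℝ
  nonneg : ∀ C : Finset V, G.IsClique (C : Set V) → ∀ f : C → Sgn, 0 ≤ p C f
  normalized : ∀ C : Finset V, G.IsClique (C : Set V) → ∑ f : C → Sgn, p C f = 1
  nodisturb : ∀ C D : Finset V, ∀ hCD : C ⊆ D, G.IsClique (D : Set V) →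
    ∀ g : C → Sgn,
      p C g = ∑ f : D → Sgn, if (∀ x : C, f ⟨x.1, hCD x.2⟩ = g x) then p D f else 0

/-- The correlator `⟨uv⟩ = Σ_f f(u)f(v)·p_{{u,v}}(f)` of two (adjacent) vertices. -/
def NDModel.corr {V : Type*} [Fintype V] [DecidableEq V] {G : SimpleGraph V}
    (M : NDModel G) (u v : V) : ℝ :=
  ∑ f : ({u, v} : Finset V) → Sgn,
    (((f ⟨u, by simp⟩ : ℤ) * (f ⟨v, by simp⟩ : ℤ) : ℤ) : ℝ) * M.p {u, v} f

/-- The single-vertex mean `⟨u⟩ = Σ_f f(u)·p_{{u}}(f)`. -/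
def NDModel.mean {V : Type*} [Fintype V] [DecidableEq V] {G : SimpleGraph V}
    (M : NDModel G) (u : V) : ℝ :=
  ∑ f : ({u} : Finset V) → Sgn, ((f ⟨u, by simp⟩ : ℤ) : ℝ) * M.p {u} f

variable {V : Type*} [Fintype V] [DecidableEq V]

/-- The set of endpoints of a set of edges. -/
def endpoints (F : Finset (Sym2 V)) : Finset V :=
  Finset.univ.filter (fun v => ∃ e ∈ F, v ∈ e)

/-- The property that a set `F` of edges of `G` forms a single cycle of length at
least 4 in `G`. -/
def IsSingleCycle (G : SimpleGraph V) (F : Finset (Sym2 V)) : Prop :=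
  ∃ (v : V) (w : G.Walk v v), w.IsCycle ∧ 4 ≤ w.length ∧ w.edges.toFinset = F

variable {G : SimpleGraph V}

lemma sgn_cases (x : Sgn) : (x : ℤ) = -1 ∨ (x : ℤ) = 1 := by
  have := x.2; simp only [Finset.mem_insert, Finset.mem_singleton] at this; exact this

lemma NDModel.corr_comm (M : NDModel G) (u v : V) : M.corr u v = M.corr v u := by
  have key : ∀ (C : Finset V) (h : C = {u, v}) (hu : u ∈ C) (hv : v ∈ C),
      (∑ f : C → Sgn, (((f ⟨u, hu⟩ : ℤ) * (f ⟨v, hv⟩ : ℤ) : ℤ) : ℝ) * M.p C f) = M.corr u v := by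
    rintro C rfl hu hv; rfl
  rw [← key {v, u} (Finset.pair_comm v u) (by simp) (by simp)]
  unfold NDModel.corr
  refine Finset.sum_congr rfl fun f _ => ?_
  push_cast
  ring

lemma NDModel.corr_eq_sum (M : NDModel G) {u v : V} (D : Finset V)
    (hD : G.IsClique (D : Set V)) (hu : u ∈ D) (hv : v ∈ D) :
    M.corr u v = ∑ f : D → Sgn,
      (((f ⟨u, hu⟩ : ℤ) * (f ⟨v, hv⟩ : ℤ) : ℤ) : ℝ) * M.p D f := by
  have hsub : ({u, v} : Finset V) ⊆ D := by
    intro x hx; simp only [Finset.mem_insert, Finset.mem_singleton] at hx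
    rcases hx with rfl | rfl <;> assumption
  unfold NDModel.corr
  have hnd := M.nodisturb {u, v} D hsub hD
  calc ∑ g : ({u, v} : Finset V) → Sgn,
        (((g ⟨u, by simp⟩ : ℤ) * (g ⟨v, by simp⟩ : ℤ) : ℤ) : ℝ) * M.p {u, v} g
      = ∑ g : ({u, v} : Finset V) → Sgn, ∑ f : D → Sgn,
          if (∀ x : ({u, v} : Finset V), f ⟨x.1, hsub x.2⟩ = g x) then
            (((g ⟨u, by simp⟩ : ℤ) * (g ⟨v, by simp⟩ : ℤ) : ℤ) : ℝ) * M.p D f else 0 := by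
        refine Finset.sum_congr rfl fun g _ => ?_
        rw [hnd g, Finset.mul_sum]
        refine Finset.sum_congr rfl fun f _ => ?_
        rw [mul_ite, mul_zero]
    _ = ∑ f : D → Sgn, ∑ g : ({u, v} : Finset V) → Sgn,
          if (∀ x : ({u, v} : Finset V), f ⟨x.1, hsub x.2⟩ = g x) then
            (((g ⟨u, by simp⟩ : ℤ) * (g ⟨v, by simp⟩ : ℤ) : ℤ) : ℝ) * M.p D f else 0 :=
        Finset.sum_comm
    _ = ∑ f : D → Sgn, (((f ⟨u, hu⟩ : ℤ) * (f ⟨v, hv⟩ : ℤ) : ℤ) : ℝ) * M.p D f := by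
        refine Finset.sum_congr rfl fun f _ => ?_
        have : ∀ g : ({u, v} : Finset V) → Sgn,
            (∀ x : ({u, v} : Finset V), f ⟨x.1, hsub x.2⟩ = g x) ↔
            ((fun x : ({u, v} : Finset V) => f ⟨x.1, hsub x.2⟩) = g) := by
          intro g; rw [funext_iff]
        simp only [this]
        rw [Finset.sum_ite_eq Finset.univ (fun x : ({u, v} : Finset V) => f ⟨x.1, hsub x.2⟩)
          (fun g => (((g ⟨u, by simp⟩ : ℤ) * (g ⟨v, by simp⟩ : ℤ) : ℤ) : ℝ) * M.p D f)]
        simp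

/-- Edge correlator. -/
def NDModel.ecorr (M : NDModel G) : Sym2 V → ℝ :=
  Sym2.lift ⟨M.corr, fun u v => M.corr_comm u v⟩

@[simp] lemma NDModel.ecorr_mk (M : NDModel G) (u v : V) :
    M.ecorr s(u, v) = M.corr u v := rfl

lemma triangle_clique {a b c : V} (hab : G.Adj a b) (hbc : G.Adj b c)
    (hca : G.Adj c a) : G.IsClique (({a, b, c} : Finset V) : Set V) := by
  intro x hx y hy hxy
  simp only [Finset.coe_insert, Set.mem_insert_iff, Finset.coe_singleton,
    Set.mem_singleton_iff] at hx hy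
  rcases hx with rfl | rfl | rfl <;> rcases hy with rfl | rfl | rfl <;>
    first
      | exact absurd rfl hxy
      | assumption
      | exact hab.symm
      | exact hbc.symm
      | exact hca.symm

lemma triangle_bound (M : NDModel G) {a b c : V} (hab : G.Adj a b) (hbc : G.Adj b c)
    (hca : G.Adj c a) (e1 e2 e3 : ℝ)
    (h1 : e1 = 1 ∨ e1 = -1) (h2 : e2 = 1 ∨ e2 = -1) (h3 : e3 = 1 ∨ e3 = -1)
    (hprod : e1 * e2 * e3 = -1) :
    e1 * M.corr a b + e2 * M.corr b c + e3 * M.corr c a ≤ 1 := by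
  classical
  set D : Finset V := {a, b, c} with hDdef
  have hD : G.IsClique (D : Set V) := triangle_clique hab hbc hca
  have ha : a ∈ D := by simp [hDdef]
  have hb : b ∈ D := by simp [hDdef]
  have hc : c ∈ D := by simp [hDdef]
  rw [M.corr_eq_sum D hD ha hb, M.corr_eq_sum D hD hb hc, M.corr_eq_sum D hD hc ha]
  rw [Finset.mul_sum, Finset.mul_sum, Finset.mul_sum, ← Finset.sum_add_distrib,
    ← Finset.sum_add_distrib]
  calc (∑ f : D → Sgn,
        (e1 * ((((f ⟨a, ha⟩ : ℤ) * (f ⟨b, hb⟩ : ℤ) : ℤ) : ℝ) * M.p D f)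
         + e2 * ((((f ⟨b, hb⟩ : ℤ) * (f ⟨c, hc⟩ : ℤ) : ℤ) : ℝ) * M.p D f)
         + e3 * ((((f ⟨c, hc⟩ : ℤ) * (f ⟨a, ha⟩ : ℤ) : ℤ) : ℝ) * M.p D f)))
      ≤ ∑ f : D → Sgn, M.p D f := by
        refine Finset.sum_le_sum fun f _ => ?_
        have hp := M.nonneg D hD f
        have hx := sgn_cases (f ⟨a, ha⟩)
        have hy := sgn_cases (f ⟨b, hb⟩)
        have hz := sgn_cases (f ⟨c, hc⟩)
        have key : e1 * (((f ⟨a, ha⟩ : ℤ) : ℝ) * ((f ⟨b, hb⟩ : ℤ) : ℝ))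
            + e2 * (((f ⟨b, hb⟩ : ℤ) : ℝ) * ((f ⟨c, hc⟩ : ℤ) : ℝ))
            + e3 * (((f ⟨c, hc⟩ : ℤ) : ℝ) * ((f ⟨a, ha⟩ : ℤ) : ℝ)) ≤ 1 := by
          rcases h1 with rfl | rfl <;> rcases h2 with rfl | rfl <;>
            rcases h3 with rfl | rfl <;>
            rcases hx with hx | hx <;> rcases hy with hy | hy <;>
            rcases hz with hz | hz <;>
            rw [hx, hy, hz] <;> push_cast <;> norm_num at hprod <;> norm_num
        push_cast
        nlinarith [key, hp]
    _ = 1 := M.normalized D hD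

/-- Chordality relativized to a vertex set, phrased for walks in `G`. -/
def ChordalOn (G : SimpleGraph V) (S : Set V) : Prop :=
  ∀ (u : V) (c : G.Walk u u), c.IsCycle → 4 ≤ c.length →
    (∀ x ∈ c.support, x ∈ S) →
    ∃ a b : V, G.Adj a b ∧ a ∈ c.support ∧ b ∈ c.support ∧ s(a, b) ∉ c.edges

/-- The inclusion homomorphism from an induced subgraph. -/
def inclHom (G : SimpleGraph V) (S : Set V) : G.induce S →g G where
  toFun := Subtype.val
  map_rel' := by intro a b h; simpa using h

/-- Lift a walk whose support lies in `S` to the induced subgraph on `S`. -/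
def liftWalk {S : Set V} :
    ∀ {u v : V} (w : G.Walk u v), (∀ x ∈ w.support, x ∈ S) →
      ∀ (hu : u ∈ S) (hv : v ∈ S), (G.induce S).Walk ⟨u, hu⟩ ⟨v, hv⟩
  | _, _, SimpleGraph.Walk.nil, _, _, _ => SimpleGraph.Walk.nil
  | _, _, SimpleGraph.Walk.cons h q, hs, hu, hv =>
      SimpleGraph.Walk.cons (by simpa using h)
        (liftWalk q (fun x hx => hs x (by simp [hx])) (hs _ (by simp)) hv)

lemma liftWalk_map {S : Set V} :
    ∀ {u v : V} (w : G.Walk u v) (hs : ∀ x ∈ w.support, x ∈ S) (hu : u ∈ S) (hv : v ∈ S),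
      (liftWalk w hs hu hv).map (inclHom G S) = w
  | _, _, SimpleGraph.Walk.nil, _, _, _ => rfl
  | _, _, SimpleGraph.Walk.cons h q, hs, hu, hv => by
      simp only [liftWalk, SimpleGraph.Walk.map_cons]
      exact congrArg _ (liftWalk_map q _ _ _)

lemma chordalOn_of_induce {S : Set V} (h : (G.induce S).IsChordal) :
    ChordalOn G S := by
  intro u c hc hlen hsup
  have hu : u ∈ S := hsup u c.start_mem_support
  set c' := liftWalk c hsup hu hu with hc'def
  have hmap : c'.map (inclHom G S) = c := liftWalk_map c hsup hu hu
  have hinj : Function.Injective (inclHom G S) := Subtype.val_injective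
  have hc'cyc : c'.IsCycle := by
    rw [← SimpleGraph.Walk.map_isCycle_iff_of_injective hinj, hmap]; exact hc
  have hc'len : 4 ≤ c'.length := by
    have : c'.length = c.length := by
      rw [← SimpleGraph.Walk.length_map (inclHom G S) c']; exact congrArg SimpleGraph.Walk.length hmap
    omega
  obtain ⟨a, b, hasup, hbsup, hadj, hnadj⟩ := h _ c' hc'cyc hc'len
  refine ⟨a.1, b.1, by simpa using hadj, ?_, ?_, ?_⟩
  · have hs := congrArg SimpleGraph.Walk.support hmap
    rw [SimpleGraph.Walk.support_map] at hs
    have hm := List.mem_map_of_mem (f := inclHom G S) hasup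
    rw [hs] at hm
    exact hm
  · have hs := congrArg SimpleGraph.Walk.support hmap
    rw [SimpleGraph.Walk.support_map] at hs
    have hm := List.mem_map_of_mem (f := inclHom G S) hbsup
    rw [hs] at hm
    exact hm
  · intro hmem
    apply hnadj
    have hs := congrArg SimpleGraph.Walk.edges hmap
    rw [SimpleGraph.Walk.edges_map] at hs
    have hmem : s(a.1, b.1) ∈ List.map (Sym2.map (inclHom G S)) c'.edges := by
      rw [hs]; exact hmem
    obtain ⟨e, he, heq⟩ := List.mem_map.mp hmem
    have : e = s(a, b) := by
      apply Sym2.map.injective hinj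
      rw [heq]; rfl
    rw [this] at he
    rw [← SimpleGraph.Subgraph.mem_edgeSet]
    exact (SimpleGraph.Walk.mem_edges_toSubgraph c').mpr he

lemma prod_pm {l : List ℝ} (h : ∀ x ∈ l, x = 1 ∨ x = -1) :
    l.prod = 1 ∨ l.prod = -1 := by
  induction l with
  | nil => simp
  | cons x l ih =>
    rcases h x (by simp) with hx | hx <;>
      rcases ih (fun y hy => h y (by simp [hy])) with hl | hl <;>
        simp [hx, hl]
lemma edge_of_length_one {u v : V} (p : G.Walk u v) (h : p.length = 1) :
    s(u, v) ∈ p.edges := by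
  cases p with
  | nil => simp at h
  | cons hadj q =>
    cases q with
    | nil => simp
    | cons h2 r => simp [SimpleGraph.Walk.length_cons] at h

lemma mem_support_tail_of_closed {v : V} (w : G.Walk v v) (hnil : ¬w.Nil) :
    ∀ x ∈ w.support, x ∈ w.support.tail := by
  cases w with
  | nil => exact absurd SimpleGraph.Walk.nil_nil hnil
  | cons h q =>
    intro x hx
    simp only [SimpleGraph.Walk.support_cons, List.tail_cons] at hx ⊢
    rcases List.mem_cons.mp hx with rfl | hx
    · exact q.end_mem_support
    · exact hx

lemma mem_edge_of_mem_support {u v : V} (w : G.Walk u v) (hw : 0 < w.length) :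
    ∀ x ∈ w.support, ∃ e ∈ w.edges, x ∈ e := by
  induction w with
  | nil => simp at hw
  | @cons a b c hadj q ih =>
    intro x hx
    simp only [SimpleGraph.Walk.support_cons, List.mem_cons] at hx
    rcases hx with rfl | hx
    · exact ⟨s(x, b), by simp, Sym2.mem_mk_left _ _⟩
    · by_cases hq : 0 < q.length
      · obtain ⟨e, he, hxe⟩ := ih hq x hx
        exact ⟨e, by simp [he], hxe⟩
      · have h0 : q.length = 0 := by omega
        cases q with
        | nil =>
          have : x = b := by simpa using hx
          subst this
          exact ⟨s(a, x), by simp, Sym2.mem_mk_right _ _⟩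
        | cons _ _ => simp at h0

open SimpleGraph Walk in
lemma cycle_bound (M : NDModel G) (S : Set V) (hS : ChordalOn G S) :
    ∀ (L : ℕ) (v : V) (w : G.Walk v v), w.IsCycle → w.length = L →
      (∀ x ∈ w.support, x ∈ S) → ∀ σ : Sym2 V → ℝ,
      (∀ e, σ e = 1 ∨ σ e = -1) → (w.edges.map σ).prod = -1 →
      (w.edges.map (fun e => σ e * M.ecorr e)).sum ≤ (L : ℝ) - 2 := by
  intro L
  induction L using Nat.strong_induction_on with
  | _ L IH =>
  intro v w hw hlen hsup σ hσ hprod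
  by_cases hL3 : w.length = 3
  · -- triangle case
    have hL : L = 3 := by omega
    subst hL
    cases w with
    | nil => simp at hL3
    | @cons _ y _ h1 q =>
      cases q with
      | nil => simp at hL3
      | @cons _ z _ h2 r =>
        cases r with
        | nil => simp at hL3
        | @cons _ d _ h3 t =>
          have ht : t.length = 0 := by
            simp only [SimpleGraph.Walk.length_cons] at hL3; omega
          cases t with
          | nil =>
            simp only [SimpleGraph.Walk.edges_cons, SimpleGraph.Walk.edges_nil,
              List.map_cons, List.map_nil, List.prod_cons, List.prod_nil,
              List.sum_cons, List.sum_nil, mul_one, add_zero] at hprod ⊢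
            have tb := triangle_bound M h1 h2 h3 (σ s(v, y)) (σ s(y, z)) (σ s(z, v))
              (hσ _) (hσ _) (hσ _) (by rw [← hprod]; ring)
            simp only [NDModel.ecorr_mk] at *
            push_cast
            linarith
          | cons _ _ => simp at ht
  · have hL4 : 4 ≤ w.length := by have := hw.three_le_length; omega
    obtain ⟨a, b, hadj, hasup, hbsup, hchord⟩ := hS v w hw hL4 hsup
    have hw1 : (w.rotate a hasup).IsCycle := hw.rotate hasup
    set w1 := w.rotate a hasup with hw1def
    have hperm_e : w1.edges.Perm w.edges := (w.rotate_edges a hasup).perm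
    have hlen1 : w1.length = w.length := by
      rw [← SimpleGraph.Walk.length_edges, ← SimpleGraph.Walk.length_edges]
      exact hperm_e.length_eq
    have hperm_t : w1.support.tail.Perm w.support.tail :=
      (w.support_rotate a hasup).perm
    have hsup1 : ∀ x ∈ w1.support, x ∈ S := by
      intro x hx
      have hx' : x ∈ w1.support.tail := mem_support_tail_of_closed w1 hw1.not_nil x hx
      exact hsup x (List.mem_of_mem_tail (hperm_t.mem_iff.mp hx'))
    have hbsup1 : b ∈ w1.support := by
      have hb' : b ∈ w.support.tail := mem_support_tail_of_closed w hw.not_nil b hbsup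
      exact List.mem_of_mem_tail (hperm_t.mem_iff.mpr hb')
    have hsab : s(a, b) ∉ w1.edges := fun hmem => hchord (hperm_e.mem_iff.mp hmem)
    have hsum_eq : (w.edges.map (fun e => σ e * M.ecorr e)).sum
        = (w1.edges.map (fun e => σ e * M.ecorr e)).sum :=
      ((hperm_e.map _).sum_eq).symm
    have hprod1 : (w1.edges.map σ).prod = -1 := by
      rw [(hperm_e.map _).prod_eq]; exact hprod
    rw [hsum_eq]
    rw [← hlen1] at hlen
    -- destructure w1 = cons hax t
    obtain ⟨x, hax, t, hteq⟩ := SimpleGraph.Walk.not_nil_iff.mp hw1.not_nil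
    rw [hteq] at hw1 hsup1 hbsup1 hsab hprod1 hlen ⊢
    obtain ⟨tpath, haxe⟩ := (SimpleGraph.Walk.cons_isCycle_iff t hax).mp hw1
    have hbt : b ∈ t.support := by
      have := hbsup1
      simp only [SimpleGraph.Walk.support_cons, List.mem_cons] at this
      rcases this with rfl | h
      · exact absurd rfl hadj.ne
      · exact h
    set t1 := t.takeUntil b hbt with ht1def
    set t2 := t.dropUntil b hbt with ht2def
    have hspec : t1.append t2 = t := t.take_spec hbt
    have t1path : t1.IsPath := tpath.takeUntil hbt
    have t2path : t2.IsPath := tpath.dropUntil hbt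
    have ht1sub : t1.edges ⊆ t.edges := t.edges_takeUntil_subset hbt
    have ht2sub : t2.edges ⊆ t.edges := t.edges_dropUntil_subset hbt
    have ht1ssub : t1.support ⊆ t.support := t.support_takeUntil_subset hbt
    have ht2ssub : t2.support ⊆ t.support := t.support_dropUntil_subset hbt
    have hanx : a ≠ x := hax.ne
    have hbnx : b ≠ x := by
      rintro rfl
      exact hsab (by simp)
    have hsabt : s(a, b) ∉ t.edges := fun h => hsab (by simp [h])
    have hsabt1 : s(a, b) ∉ t1.edges := fun h => hsabt (ht1sub h)
    have hsabt2 : s(a, b) ∉ t2.edges := fun h => hsabt (ht2sub h)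
    have ht1len : 0 < t1.length := by
      rcases Nat.eq_zero_or_pos t1.length with h0 | h
      · exact absurd (SimpleGraph.Walk.eq_of_length_eq_zero (p := t1) h0).symm hbnx
      · exact h
    have ht2len : 2 ≤ t2.length := by
      rcases Nat.lt_or_ge t2.length 2 with h2 | h
      · interval_cases h0 : t2.length
        · exact absurd (SimpleGraph.Walk.eq_of_length_eq_zero (p := t2) h0) hadj.ne'
        · have : s(b, a) ∈ t2.edges := edge_of_length_one t2 h0
          rw [Sym2.eq_swap] at this
          exact absurd this hsabt2
      · exact h
    have htlen : t.length = t1.length + t2.length := by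
      rw [← hspec, SimpleGraph.Walk.length_append]
    -- a not in t1.support
    have hat2 : a ∈ t2.support.tail := by
      have hnil2 : ¬t2.Nil := SimpleGraph.Walk.not_nil_iff_lt_length.mpr (by omega)
      obtain ⟨y, hby, t2', ht2'⟩ := SimpleGraph.Walk.not_nil_iff.mp hnil2
      rw [ht2']
      simp only [SimpleGraph.Walk.support_cons, List.tail_cons]
      exact t2'.end_mem_support
    have hant1 : a ∉ t1.support := by
      intro hmem
      have hnd : t.support.Nodup := tpath.support_nodup
      rw [← hspec, SimpleGraph.Walk.support_append] at hnd
      exact (List.disjoint_of_nodup_append hnd) hmem hat2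
    -- the two subcycles
    set p1 : G.Walk a b := SimpleGraph.Walk.cons hax t1 with hp1def
    set c1 : G.Walk b b := SimpleGraph.Walk.cons hadj.symm p1 with hc1def
    set c2 : G.Walk a a := SimpleGraph.Walk.cons hadj t2 with hc2def
    have hsabax : s(a, b) ≠ s(a, x) := by
      intro h
      rw [Sym2.eq_iff] at h
      rcases h with ⟨-, h⟩ | ⟨h, -⟩
      · exact hbnx h
      · exact hanx h
    have c1cyc : c1.IsCycle := by
      rw [hc1def, SimpleGraph.Walk.cons_isCycle_iff]
      constructor
      · rw [hp1def, SimpleGraph.Walk.cons_isPath_iff]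
        exact ⟨t1path, hant1⟩
      · rw [Sym2.eq_swap]
        simp only [hp1def, SimpleGraph.Walk.edges_cons, List.mem_cons]
        rintro (h | h)
        · exact hsabax h
        · exact hsabt1 h
    have c2cyc : c2.IsCycle := by
      rw [hc2def, SimpleGraph.Walk.cons_isCycle_iff]
      exact ⟨t2path, hsabt2⟩
    have hc1len : c1.length = t1.length + 2 := by simp [hc1def, hp1def]
    have hc2len : c2.length = t2.length + 1 := by simp [hc2def]
    have hLnat : L = t1.length + t2.length + 1 := by
      have h' := hlen
      simp only [SimpleGraph.Walk.length_cons] at h'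
      omega
    -- supports in S
    have hsupc1 : ∀ y ∈ c1.support, y ∈ S := by
      intro y hy
      simp only [hc1def, hp1def, SimpleGraph.Walk.support_cons, List.mem_cons] at hy
      rcases hy with rfl | rfl | hy
      · exact hsup1 y hbsup1
      · exact hsup1 y (by simp)
      · exact hsup1 y (by simp [SimpleGraph.Walk.support_cons, List.mem_cons,
          ht1ssub hy])
    have hsupc2 : ∀ y ∈ c2.support, y ∈ S := by
      intro y hy
      simp only [hc2def, SimpleGraph.Walk.support_cons, List.mem_cons] at hy
      rcases hy with rfl | hy
      · exact hsup1 y (by simp)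
      · exact hsup1 y (by simp [SimpleGraph.Walk.support_cons, List.mem_cons,
          ht2ssub hy])
    -- sign functions
    set P1 : ℝ := (p1.edges.map σ).prod with hP1def
    set P2 : ℝ := (t2.edges.map σ).prod with hP2def
    have hP1pm : P1 = 1 ∨ P1 = -1 := by
      apply prod_pm
      intro y hy
      obtain ⟨e, _, rfl⟩ := List.mem_map.mp hy
      exact hσ e
    set δ : ℝ := -P1 with hδdef
    set σ1 := Function.update σ s(a, b) δ with hσ1def
    set σ2 := Function.update σ s(a, b) (-δ) with hσ2def
    have hσ1pm : ∀ e, σ1 e = 1 ∨ σ1 e = -1 := by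
      intro e
      by_cases he : e = s(a, b)
      · rw [hσ1def, he, Function.update_self]
        rcases hP1pm with h | h <;> simp [hδdef, h]
      · rw [hσ1def, Function.update_of_ne he]; exact hσ e
    have hσ2pm : ∀ e, σ2 e = 1 ∨ σ2 e = -1 := by
      intro e
      by_cases he : e = s(a, b)
      · rw [hσ2def, he, Function.update_self]
        rcases hP1pm with h | h <;> simp [hδdef, h]
      · rw [hσ2def, Function.update_of_ne he]; exact hσ e
    have hupd : ∀ (d : ℝ) (l : List (Sym2 V)), s(a, b) ∉ l → ∀ g : Sym2 V → ℝ,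
        l.map (fun e => Function.update σ s(a, b) d e * g e)
          = l.map (fun e => σ e * g e) := by
      intro d l hl g
      exact List.map_congr_left fun e he => by
        rw [Function.update_of_ne (fun h => hl (by rw [← h]; exact he))]
    have hupd' : ∀ (d : ℝ) (l : List (Sym2 V)), s(a, b) ∉ l →
        l.map (Function.update σ s(a, b) d) = l.map σ := by
      intro d l hl
      exact List.map_congr_left fun e he => Function.update_of_ne (fun h => hl (by rw [← h]; exact he)) _ _
    have hsabp1 : s(a, b) ∉ p1.edges := by
      simp only [hp1def, SimpleGraph.Walk.edges_cons, List.mem_cons]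
      rintro (h | h)
      · exact hsabax h
      · exact hsabt1 h
    have haxab : s(a, x) ≠ s(a, b) := fun h => hsabax h.symm
    have hP1eq : P1 = σ s(a, x) * (t1.edges.map σ).prod := by
      simp [hP1def, hp1def]
    have hprodc1 : (c1.edges.map σ1).prod = -1 := by
      have : c1.edges = s(b, a) :: p1.edges := by simp [hc1def]
      rw [this, List.map_cons, List.prod_cons, Sym2.eq_swap, hσ1def, hupd' δ _ hsabp1,
        Function.update_self]
      show δ * P1 = -1
      rcases hP1pm with h | h <;> rw [hδdef, h] <;> norm_num
    have hP1P2 : P1 * P2 = -1 := by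
      rw [← hprod1]
      simp only [SimpleGraph.Walk.edges_cons, ← hspec, SimpleGraph.Walk.edges_append,
        List.map_cons, List.map_append, List.prod_cons, List.prod_append]
      rw [hP1eq, hP2def]
      ring
    have hprodc2 : (c2.edges.map σ2).prod = -1 := by
      have : c2.edges = s(a, b) :: t2.edges := by simp [hc2def]
      rw [this, List.map_cons, List.prod_cons, hσ2def, hupd' _ _ hsabt2,
        Function.update_self]
      show -δ * P2 = -1
      rcases hP1pm with h | h <;> rw [hδdef, h] <;> rw [h] at hP1P2 <;> linarith
    have ihc1 := IH c1.length (by omega) b c1 c1cyc rfl hsupc1 σ1 hσ1pm hprodc1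
    have ihc2 := IH c2.length (by omega) a c2 c2cyc rfl hsupc2 σ2 hσ2pm hprodc2
    have e1 : (c1.edges.map (fun e => σ1 e * M.ecorr e)).sum
        = δ * M.ecorr s(a, b) + (σ s(a, x) * M.ecorr s(a, x)
          + (t1.edges.map (fun e => σ e * M.ecorr e)).sum) := by
      have : c1.edges = s(b, a) :: s(a, x) :: t1.edges := by simp [hc1def, hp1def]
      rw [this, List.map_cons, List.map_cons, List.sum_cons, List.sum_cons, Sym2.eq_swap,
        hσ1def, hupd δ _ hsabt1, Function.update_self, Function.update_of_ne haxab]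
    have e2 : (c2.edges.map (fun e => σ2 e * M.ecorr e)).sum
        = -δ * M.ecorr s(a, b) + (t2.edges.map (fun e => σ e * M.ecorr e)).sum := by
      have : c2.edges = s(a, b) :: t2.edges := by simp [hc2def]
      rw [this, List.map_cons, List.sum_cons, hσ2def, hupd _ _ hsabt2,
        Function.update_self]
    have egoal : ((SimpleGraph.Walk.cons hax t).edges.map (fun e => σ e * M.ecorr e)).sum
        = σ s(a, x) * M.ecorr s(a, x)
          + ((t1.edges.map (fun e => σ e * M.ecorr e)).sum
            + (t2.edges.map (fun e => σ e * M.ecorr e)).sum) := by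
      simp only [SimpleGraph.Walk.edges_cons, ← hspec, SimpleGraph.Walk.edges_append,
        List.map_cons, List.map_append, List.sum_cons, List.sum_append]
    rw [egoal]
    rw [e1] at ihc1
    rw [e2] at ihc2
    have hcast1 : (c1.length : ℝ) = (t1.length : ℝ) + 2 := by rw [hc1len]; push_cast; ring
    have hcast2 : (c2.length : ℝ) = (t2.length : ℝ) + 1 := by rw [hc2len]; push_cast; ring
    have hcastL : (L : ℝ) = (t1.length : ℝ) + (t2.length : ℝ) + 1 := by
      rw [hLnat]; push_cast; ring
    rw [hcast1] at ihc1
    rw [hcast2] at ihc2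
    rw [hcastL]
    linarith

lemma single_cycle_bound (M : NDModel G) (F : Finset (Sym2 V))
    (hcyc : IsSingleCycle G F)
    (hch : (G.induce ((endpoints F : Finset V) : Set V)).IsChordal)
    (σ : Sym2 V → ℝ) (hσpm : ∀ e, σ e = 1 ∨ σ e = -1)
    (c₁ : Sym2 V) (hc₁ : c₁ ∈ F) (hneg : σ c₁ = -1)
    (hpos : ∀ e ∈ F, e ≠ c₁ → σ e = 1) :
    ∑ e ∈ F, σ e * M.ecorr e ≤ (F.card : ℝ) - 2 := by
  obtain ⟨v, w, hw, hlen4, hedges⟩ := hcyc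
  have hnodup : w.edges.Nodup := hw.isCircuit.isTrail.edges_nodup
  have hsupS : ∀ x ∈ w.support, x ∈ ((endpoints F : Finset V) : Set V) := by
    intro x hx
    obtain ⟨e, he, hxe⟩ := mem_edge_of_mem_support w (by omega) x hx
    have heF : e ∈ F := hedges ▸ List.mem_toFinset.mpr he
    simp only [endpoints, Finset.coe_filter, Set.mem_setOf_eq]
    exact ⟨Finset.mem_univ x, e, heF, hxe⟩
  have hprod : (w.edges.map σ).prod = -1 := by
    rw [← List.prod_toFinset σ hnodup, hedges, ← Finset.mul_prod_erase F σ hc₁, hneg,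
      Finset.prod_eq_one fun e he =>
        hpos e (Finset.mem_of_mem_erase he) (Finset.ne_of_mem_erase he)]
    norm_num
  have hsum : ∑ e ∈ F, σ e * M.ecorr e
      = (w.edges.map (fun e => σ e * M.ecorr e)).sum := by
    rw [← hedges, List.sum_toFinset _ hnodup]
  have hcard : F.card = w.length := by
    rw [← hedges, List.toFinset_card_of_nodup hnodup, SimpleGraph.Walk.length_edges]
  rw [hsum, hcard]
  exact cycle_bound M _ (chordalOn_of_induce hch) w.length v w hw rfl hsupS σ hσpm hprod

/-- monogamy of two cycle inequalities. Let `G` contain an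
`n`-cycle `A 0, …, A (n−1)` and an `m`-cycle `A' 0, …, A' (m−1)` (`n, m ≥ 4`)
sharing at least two vertices and no edges. If the `n + m` cycle edges can be
partitioned into two sets `F1`, `F2`, each forming a single cycle of length at
least 4 in `G`, each containing exactly one of the two contradiction edges
`{A (n−1), A 0}` and `{A' (m−1), A' 0}`, and each spanning a chordal induced
subgraph of `G`, then every no-disturbance model on `G` satisfies
`I(n) + I(m) ≤ n + m − 4`. -/
theorem two_cycle_monogamy
    (G : SimpleGraph V) (n m : ℕ) (hn : 4 ≤ n) (hm : 4 ≤ m)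
    (A A' : ℕ → V)
    (hAinj : Set.InjOn A (Set.Iio n)) (hA'inj : Set.InjOn A' (Set.Iio m))
    (hadjA : ∀ i < n - 1, G.Adj (A i) (A (i + 1)))
    (hadjA0 : G.Adj (A (n - 1)) (A 0))
    (hadjA' : ∀ i < m - 1, G.Adj (A' i) (A' (i + 1)))
    (hadjA'0 : G.Adj (A' (m - 1)) (A' 0))
    (E1 E2 : Finset (Sym2 V))
    (hE1 : E1 = ((Finset.range (n - 1)).image fun i => s(A i, A (i + 1)))
      ∪ {s(A (n - 1), A 0)})
    (hE2 : E2 = ((Finset.range (m - 1)).image fun i => s(A' i, A' (i + 1)))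
      ∪ {s(A' (m - 1), A' 0)})
    (hshare : 2 ≤ (((Finset.range n).image A) ∩ ((Finset.range m).image A')).card)
    (hnoedge : Disjoint E1 E2)
    (F1 F2 : Finset (Sym2 V))
    (hpart : F1 ∪ F2 = E1 ∪ E2) (hdisj : Disjoint F1 F2)
    (hcyc1 : IsSingleCycle G F1) (hcyc2 : IsSingleCycle G F2)
    (hcontr : (s(A (n - 1), A 0) ∈ F1 ∧ s(A' (m - 1), A' 0) ∈ F2)
      ∨ (s(A' (m - 1), A' 0) ∈ F1 ∧ s(A (n - 1), A 0) ∈ F2))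
    (hchordal1 : (G.induce ((endpoints F1 : Finset V) : Set V)).IsChordal)
    (hchordal2 : (G.induce ((endpoints F2 : Finset V) : Set V)).IsChordal) :
    ∀ M : NDModel G,
      ((∑ i ∈ Finset.range (n - 1), M.corr (A i) (A (i + 1)))
          - M.corr (A (n - 1)) (A 0))
        + ((∑ i ∈ Finset.range (m - 1), M.corr (A' i) (A' (i + 1)))
          - M.corr (A' (m - 1)) (A' 0))
      ≤ (n : ℝ) + (m : ℝ) - 4 := by
  intro M
  classical
  set cA : Sym2 V := s(A (n - 1), A 0) with hcA
  set cA' : Sym2 V := s(A' (m - 1), A' 0) with hcA'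
  set σ : Sym2 V → ℝ := fun e => if e = cA ∨ e = cA' then -1 else 1 with hσdef
  have hσpm : ∀ e, σ e = 1 ∨ σ e = -1 := by
    intro e; by_cases h : e = cA ∨ e = cA' <;> simp [hσdef, h]
  have hσneg1 : σ cA = -1 := by simp [hσdef]
  have hσneg2 : σ cA' = -1 := by simp [hσdef]
  have hσpos : ∀ e, e ≠ cA → e ≠ cA' → σ e = 1 := by
    intro e h1 h2; simp [hσdef, h1, h2]
  have hcAE1 : cA ∈ E1 := by rw [hE1]; exact Finset.mem_union_right _ (by simp)
  have hcA'E2 : cA' ∈ E2 := by rw [hE2]; exact Finset.mem_union_right _ (by simp)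
  -- injectivity facts for the first cycle
  have himg_inj : Set.InjOn (fun i => s(A i, A (i + 1))) ↑(Finset.range (n - 1)) := by
    intro i hi j hj h
    simp only [Finset.coe_range, Set.mem_Iio] at hi hj
    simp only [Sym2.eq_iff] at h
    rcases h with ⟨h1, h2⟩ | ⟨h1, h2⟩
    · exact hAinj (Set.mem_Iio.mpr (by omega)) (Set.mem_Iio.mpr (by omega)) h1
    · have e1 : i = j + 1 :=
        hAinj (Set.mem_Iio.mpr (by omega)) (Set.mem_Iio.mpr (by omega)) h1
      have e2 : i + 1 = j :=
        hAinj (Set.mem_Iio.mpr (by omega)) (Set.mem_Iio.mpr (by omega)) h2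
      omega
  have himg_inj' : Set.InjOn (fun i => s(A' i, A' (i + 1))) ↑(Finset.range (m - 1)) := by
    intro i hi j hj h
    simp only [Finset.coe_range, Set.mem_Iio] at hi hj
    simp only [Sym2.eq_iff] at h
    rcases h with ⟨h1, h2⟩ | ⟨h1, h2⟩
    · exact hA'inj (Set.mem_Iio.mpr (by omega)) (Set.mem_Iio.mpr (by omega)) h1
    · have e1 : i = j + 1 :=
        hA'inj (Set.mem_Iio.mpr (by omega)) (Set.mem_Iio.mpr (by omega)) h1
      have e2 : i + 1 = j :=
        hA'inj (Set.mem_Iio.mpr (by omega)) (Set.mem_Iio.mpr (by omega)) h2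
      omega
  have hcA_img : cA ∉ (Finset.range (n - 1)).image (fun i => s(A i, A (i + 1))) := by
    intro hmem
    obtain ⟨i, hi, h⟩ := Finset.mem_image.mp hmem
    rw [Finset.mem_range] at hi
    rw [hcA] at h
    simp only [Sym2.eq_iff] at h
    rcases h with ⟨h1, h2⟩ | ⟨h1, h2⟩
    · have : i = n - 1 :=
        hAinj (Set.mem_Iio.mpr (by omega)) (Set.mem_Iio.mpr (by omega)) h1
      omega
    · have e1 : i = 0 :=
        hAinj (Set.mem_Iio.mpr (by omega)) (Set.mem_Iio.mpr (by omega)) h1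
      have e2 : i + 1 = n - 1 :=
        hAinj (Set.mem_Iio.mpr (by omega)) (Set.mem_Iio.mpr (by omega)) h2
      omega
  have hcA'_img : cA' ∉ (Finset.range (m - 1)).image (fun i => s(A' i, A' (i + 1))) := by
    intro hmem
    obtain ⟨i, hi, h⟩ := Finset.mem_image.mp hmem
    rw [Finset.mem_range] at hi
    rw [hcA'] at h
    simp only [Sym2.eq_iff] at h
    rcases h with ⟨h1, h2⟩ | ⟨h1, h2⟩
    · have : i = m - 1 :=
        hA'inj (Set.mem_Iio.mpr (by omega)) (Set.mem_Iio.mpr (by omega)) h1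
      omega
    · have e1 : i = 0 :=
        hA'inj (Set.mem_Iio.mpr (by omega)) (Set.mem_Iio.mpr (by omega)) h1
      have e2 : i + 1 = m - 1 :=
        hA'inj (Set.mem_Iio.mpr (by omega)) (Set.mem_Iio.mpr (by omega)) h2
      omega
  -- sums over E1 and E2
  have hE1sum : ∑ e ∈ E1, σ e * M.ecorr e
      = (∑ i ∈ Finset.range (n - 1), M.corr (A i) (A (i + 1)))
        - M.corr (A (n - 1)) (A 0) := by
    rw [hE1, Finset.sum_union (Finset.disjoint_singleton_right.mpr hcA_img),
      Finset.sum_image (fun x hx y hy h => himg_inj (Finset.mem_coe.mpr hx)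
        (Finset.mem_coe.mpr hy) h), Finset.sum_singleton]
    have hterm : ∀ i ∈ Finset.range (n - 1),
        σ s(A i, A (i + 1)) * M.ecorr s(A i, A (i + 1))
          = M.corr (A i) (A (i + 1)) := by
      intro i hi
      have h1 : s(A i, A (i + 1)) ≠ cA :=
        fun h => hcA_img (h ▸ Finset.mem_image_of_mem _ hi)
      have h2 : s(A i, A (i + 1)) ≠ cA' := by
        intro h
        have hmem : s(A i, A (i + 1)) ∈ E1 := by
          rw [hE1]; exact Finset.mem_union_left _ (Finset.mem_image_of_mem _ hi)
        exact (Finset.disjoint_left.mp hnoedge hmem) (h ▸ hcA'E2)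
      rw [hσpos _ h1 h2, NDModel.ecorr_mk, one_mul]
    rw [Finset.sum_congr rfl hterm, hσneg1]
    have : M.ecorr cA = M.corr (A (n - 1)) (A 0) := by rw [hcA, NDModel.ecorr_mk]
    rw [this]; ring
  have hE2sum : ∑ e ∈ E2, σ e * M.ecorr e
      = (∑ i ∈ Finset.range (m - 1), M.corr (A' i) (A' (i + 1)))
        - M.corr (A' (m - 1)) (A' 0) := by
    rw [hE2, Finset.sum_union (Finset.disjoint_singleton_right.mpr hcA'_img),
      Finset.sum_image (fun x hx y hy h => himg_inj' (Finset.mem_coe.mpr hx)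
        (Finset.mem_coe.mpr hy) h), Finset.sum_singleton]
    have hterm : ∀ i ∈ Finset.range (m - 1),
        σ s(A' i, A' (i + 1)) * M.ecorr s(A' i, A' (i + 1))
          = M.corr (A' i) (A' (i + 1)) := by
      intro i hi
      have h2 : s(A' i, A' (i + 1)) ≠ cA' :=
        fun h => hcA'_img (h ▸ Finset.mem_image_of_mem _ hi)
      have h1 : s(A' i, A' (i + 1)) ≠ cA := by
        intro h
        have hmem : s(A' i, A' (i + 1)) ∈ E2 := by
          rw [hE2]; exact Finset.mem_union_left _ (Finset.mem_image_of_mem _ hi)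
        exact (Finset.disjoint_left.mp hnoedge (h ▸ hcAE1)) hmem
      rw [hσpos _ h1 h2, NDModel.ecorr_mk, one_mul]
    rw [Finset.sum_congr rfl hterm, hσneg2]
    have : M.ecorr cA' = M.corr (A' (m - 1)) (A' 0) := by rw [hcA', NDModel.ecorr_mk]
    rw [this]; ring
  -- cardinalities
  have hE1card : E1.card = n := by
    rw [hE1, Finset.card_union_of_disjoint (Finset.disjoint_singleton_right.mpr hcA_img),
      Finset.card_image_of_injOn himg_inj, Finset.card_range, Finset.card_singleton]
    omega
  have hE2card : E2.card = m := by
    rw [hE2, Finset.card_union_of_disjoint (Finset.disjoint_singleton_right.mpr hcA'_img),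
      Finset.card_image_of_injOn himg_inj', Finset.card_range, Finset.card_singleton]
    omega
  have hFcard : F1.card + F2.card = n + m := by
    rw [← Finset.card_union_of_disjoint hdisj, hpart,
      Finset.card_union_of_disjoint hnoedge, hE1card, hE2card]
  have hsum_split : ∑ e ∈ E1, σ e * M.ecorr e + ∑ e ∈ E2, σ e * M.ecorr e
      = ∑ e ∈ F1, σ e * M.ecorr e + ∑ e ∈ F2, σ e * M.ecorr e := by
    rw [← Finset.sum_union hnoedge, ← hpart, Finset.sum_union hdisj]
  have key : ∀ (F : Finset (Sym2 V)) (c d : Sym2 V), IsSingleCycle G F →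
      (G.induce ((endpoints F : Finset V) : Set V)).IsChordal →
      c ∈ F → d ∉ F → σ c = -1 → (∀ e, e ≠ c → e ≠ d → σ e = 1) →
      ∑ e ∈ F, σ e * M.ecorr e ≤ (F.card : ℝ) - 2 := by
    intro F c d h1 h2 hc hd hneg hrest
    exact single_cycle_bound M F h1 h2 σ hσpm c hc hneg
      (fun e heF hene => hrest e hene (fun h => hd (h ▸ heF)))
  have hbounds : ∑ e ∈ F1, σ e * M.ecorr e ≤ (F1.card : ℝ) - 2
      ∧ ∑ e ∈ F2, σ e * M.ecorr e ≤ (F2.card : ℝ) - 2 := by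
    rcases hcontr with ⟨h1, h2⟩ | ⟨h1, h2⟩
    · exact ⟨key F1 cA cA' hcyc1 hchordal1 h1
        (fun hmem => (Finset.disjoint_left.mp hdisj hmem) h2) hσneg1 hσpos,
      key F2 cA' cA hcyc2 hchordal2 h2
        (fun hmem => (Finset.disjoint_left.mp hdisj h1) hmem) hσneg2
        (fun e he1 he2 => hσpos e he2 he1)⟩
    · exact ⟨key F1 cA' cA hcyc1 hchordal1 h1
        (fun hmem => (Finset.disjoint_left.mp hdisj hmem) h2) hσneg2
        (fun e he1 he2 => hσpos e he2 he1),
      key F2 cA cA' hcyc2 hchordal2 h2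
        (fun hmem => (Finset.disjoint_left.mp hdisj h1) hmem) hσneg1 hσpos⟩
  obtain ⟨b1, b2⟩ := hbounds
  rw [← hE1sum, ← hE2sum, hsum_split]
  have hcast : (F1.card : ℝ) + (F2.card : ℝ) = (n : ℝ) + m := by
    have h : ((F1.card + F2.card : ℕ) : ℝ) = ((n + m : ℕ) : ℝ) := by rw [hFcard]
    push_cast at h
    linarith
  linarith
end

section
/- There exists a tripartite no-signaling box P(a,b,c|x,y,z) with inputs x, y, z ∈ {1,2,3} and outcomes a, b, c ∈ {−1,+1} (in fact a local deterministic box) such that I_AB + I_AC = 10, where I_AB = ⟨A_1B_1⟩ − ⟨A_1B_2⟩ − ⟨A_1B_3⟩ + ⟨A_2B_1⟩ + ⟨A_2B_2⟩ − ⟨A_2B_3⟩ + ⟨A_3B_1⟩ + ⟨A_3B_2⟩ + ⟨A_3B_3⟩ with ⟨A_xB_y⟩ = Σ_{a,b,c} ab·P(a,b,c|x,y,z), and I_AC is the same expression with Bob's outcome b replaced by Charlie's outcome c. Hence the no-signaling monogamy relation I_AB + I_AC ≤ 10 is tight. -/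
/-- A tripartite no-signaling box with inputs `x, y, z ∈ {1,2,3}` and `±1`-valued
outcomes: nonnegative, normalized, and such that the marginal distribution of the
outcomes of any subset of the parties is independent of the inputs of the
remaining parties. -/
structure NSBox3 where
  P : Fin 3 → Fin 3 → Fin 3 → Sgn → Sgn → Sgn → ℝ
  nonneg : ∀ x y z a b c, 0 ≤ P x y z a b c
  normalized : ∀ x y z, ∑ a : Sgn, ∑ b : Sgn, ∑ c : Sgn, P x y z a b c = 1
  nsAB : ∀ x y z z' a b, ∑ c : Sgn, P x y z a b c = ∑ c : Sgn, P x y z' a b c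
  nsAC : ∀ x y y' z a c, ∑ b : Sgn, P x y z a b c = ∑ b : Sgn, P x y' z a b c
  nsBC : ∀ x x' y z b c, ∑ a : Sgn, P x y z a b c = ∑ a : Sgn, P x' y z a b c
  nsA : ∀ x y y' z z' a,
    ∑ b : Sgn, ∑ c : Sgn, P x y z a b c = ∑ b : Sgn, ∑ c : Sgn, P x y' z' a b c
  nsB : ∀ x x' y z z' b,
    ∑ a : Sgn, ∑ c : Sgn, P x y z a b c = ∑ a : Sgn, ∑ c : Sgn, P x' y z' a b c
  nsC : ∀ x x' y y' z c,
    ∑ a : Sgn, ∑ b : Sgn, P x y z a b c = ∑ a : Sgn, ∑ b : Sgn, P x' y' z a b c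

/-- The Alice–Bob correlator `⟨A_x B_y⟩ = Σ_{a,b,c} ab·P(a,b,c|x,y,z)`
(independent of `z` by no-signaling, here evaluated at `z = 1`). -/
def NSBox3.corrAB (B : NSBox3) (x y : Fin 3) : ℝ :=
  ∑ a : Sgn, ∑ b : Sgn, ∑ c : Sgn, (((a : ℤ) * (b : ℤ) : ℤ) : ℝ) * B.P x y 0 a b c

/-- The Alice–Charlie correlator `⟨A_x C_z⟩ = Σ_{a,b,c} ac·P(a,b,c|x,y,z)`
(independent of `y` by no-signaling, here evaluated at `y = 1`). -/
def NSBox3.corrAC (B : NSBox3) (x z : Fin 3) : ℝ :=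
  ∑ a : Sgn, ∑ b : Sgn, ∑ c : Sgn, (((a : ℤ) * (c : ℤ) : ℤ) : ℝ) * B.P x 0 z a b c

/-- The Alice–Bob XOR-game Bell expression `I_AB`. -/
def NSBox3.IAB (B : NSBox3) : ℝ :=
  B.corrAB 0 0 - B.corrAB 0 1 - B.corrAB 0 2
    + B.corrAB 1 0 + B.corrAB 1 1 - B.corrAB 1 2
    + B.corrAB 2 0 + B.corrAB 2 1 + B.corrAB 2 2

/-- The Alice–Charlie XOR-game Bell expression `I_AC`. -/
def NSBox3.IAC (B : NSBox3) : ℝ :=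
  B.corrAC 0 0 - B.corrAC 0 1 - B.corrAC 0 2
    + B.corrAC 1 0 + B.corrAC 1 1 - B.corrAC 1 2
    + B.corrAC 2 0 + B.corrAC 2 1 + B.corrAC 2 2


def neg1 : Sgn := ⟨-1, by decide⟩
def pos1 : Sgn := ⟨1, by decide⟩

lemma sum_sgn (F : Sgn → ℝ) : ∑ a : Sgn, F a = F neg1 + F pos1 := by
  have : (Finset.univ : Finset Sgn) = {neg1, pos1} := by decide
  rw [this, Finset.sum_insert (by decide), Finset.sum_singleton]

lemma sum_ind (t : Sgn) : ∑ c : Sgn, (if c = t then (1:ℝ) else 0) = 1 := by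
  rw [sum_sgn]; rcases t with ⟨v, hv⟩; fin_cases hv <;> simp [neg1, pos1] <;> exact if_neg (by decide)

lemma sum_right (w : Sgn) (p : ℝ) :
    ∑ c : Sgn, p * (if c = w then (1:ℝ) else 0) = p := by
  rw [← Finset.mul_sum, sum_ind, mul_one]

lemma sum_left (u : Sgn) (q : ℝ) :
    ∑ a : Sgn, (if a = u then (1:ℝ) else 0) * q = q := by
  rw [← Finset.sum_mul, sum_ind, one_mul]

def fA : Fin 3 → Sgn := fun _ => pos1
def gB : Fin 3 → Sgn := fun y => if y = 2 then neg1 else pos1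

noncomputable def Pdet (x y z : Fin 3) (a b c : Sgn) : ℝ :=
  (if a = fA x then (1 : ℝ) else 0) * (if b = gB y then (1 : ℝ) else 0)
    * (if c = gB z then (1 : ℝ) else 0)

/-- The no-signaling monogamy relation `I_AB + I_AC ≤ 10` is tight:
there is a tripartite no-signaling box — in fact a local deterministic box
`P(a,b,c|x,y,z) = [a = f x]·[b = g y]·[c = h z]` — with `I_AB + I_AC = 10`. -/
theorem xor_game_ns_monogamy_tight :
    ∃ B : NSBox3,
      (∃ f g h : Fin 3 → Sgn, ∀ x y z a b c,
        B.P x y z a b c =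
          (if a = f x then (1 : ℝ) else 0) * (if b = g y then (1 : ℝ) else 0)
            * (if c = h z then (1 : ℝ) else 0)) ∧
      B.IAB + B.IAC = 10 := by
  refine ⟨⟨Pdet, ?_, ?_, ?_, ?_, ?_, ?_, ?_, ?_⟩, ⟨fA, gB, gB, fun _ _ _ _ _ _ => rfl⟩, ?_⟩
  · intro x y z a b c; unfold Pdet; positivity
  · intro x y z; simp only [Pdet, sum_right, sum_ind]
  · intro x y z z' a b; simp only [Pdet, sum_right]
  · intro x y y' z a c; simp only [Pdet, mul_right_comm, sum_right]
  · intro x x' y z b c; simp only [Pdet, fA]; rfl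
  · intro x y y' z z' a; simp only [Pdet, sum_right]
  · intro x x' y z z' b; simp only [Pdet, sum_right, sum_left]
  · intro x x' y y' z c; simp only [Pdet, mul_right_comm, sum_right, sum_left]
  · simp only [NSBox3.IAB, NSBox3.IAC, NSBox3.corrAB, NSBox3.corrAC, Pdet, sum_sgn]
    norm_num [fA, gB, neg1, pos1, Fin.ext_iff]
end

section
/- Let G be a finite chordal simple graph with vertex set V, let α : V → ℝ and β : E(G) → ℝ, and for an assignment a : V → {−1,+1} define E(a) = Σ_{v∈V} α(v) a(v) + Σ_{{u,v}∈E(G)} β({u,v}) a(u)a(v). Then the maximum over all no-disturbance models on G with outcomes in {−1,+1} of the quantity Σ_{v∈V} α(v)⟨v⟩ + Σ_{{u,v}∈E(G)} β({u,v})⟨uv⟩ equals the maximum of E(a) over deterministic assignments a : V → {−1,+1}. In particular, on a chordal commutation graph the no-disturbance value of any such expression equals its classical value. -/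
variable {V : Type*} [Fintype V] [DecidableEq V]

/-- The unordered pair `{u, v}` of the endpoints of an element of `Sym2 V`. -/
def pairFinset : Sym2 V → Finset V :=
  Sym2.lift ⟨fun u v => ({u, v} : Finset V), fun u v => Finset.pair_comm u v⟩

/-- The value `a(u)a(v)` of an assignment on an unordered pair `{u, v}`. -/
def edgeTerm (a : V → Sgn) : Sym2 V → ℤ :=
  Sym2.lift ⟨fun u v => (a u : ℤ) * (a v : ℤ), fun u v => mul_comm _ _⟩

/-- The correlator `⟨uv⟩` of a no-disturbance model on the unordered pair `e`. -/
noncomputable def NDModel.corrE {G : SimpleGraph V} (M : NDModel G) (e : Sym2 V) : ℝ :=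
  ∑ f : ↥(pairFinset e) → Sgn,
    ((∏ x : ↥(pairFinset e), (f x : ℤ) : ℤ) : ℝ) * M.p (pairFinset e) f


set_option linter.unusedSectionVars false
set_option maxHeartbeats 1000000

open SimpleGraph Finset

variable {G : SimpleGraph V}




/-- `v` is simplicial within the vertex set `S`. -/
def SimplIn (G : SimpleGraph V) (S : Finset V) (v : V) : Prop :=
  ∀ ⦃u⦄, u ∈ S → ∀ ⦃w⦄, w ∈ S → G.Adj v u → G.Adj v w → u ≠ w → G.Adj u w

/-- reachability within a finset -/
def ReachIn (G : SimpleGraph V) (s : Finset V) (a u : V) : Prop :=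
  ∃ p : G.Walk a u, ∀ z ∈ p.support, z ∈ s

lemma ReachIn.refl {s : Finset V} {a : V} (ha : a ∈ s) : ReachIn G s a a :=
  ⟨SimpleGraph.Walk.nil, by simp [ha]⟩

lemma ReachIn.mem {s : Finset V} {a u : V} (h : ReachIn G s a u) : u ∈ s := by
  obtain ⟨p, hp⟩ := h
  exact hp u p.end_mem_support

lemma ReachIn.mem_start {s : Finset V} {a u : V} (h : ReachIn G s a u) : a ∈ s := by
  obtain ⟨p, hp⟩ := h
  exact hp a p.start_mem_support

lemma ReachIn.of_mem_support {s : Finset V} {a u z : V} {p : G.Walk a u}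
    (hp : ∀ z ∈ p.support, z ∈ s) (hz : z ∈ p.support) : ReachIn G s a z :=
  ⟨p.takeUntil z hz, fun y hy => hp y (p.support_takeUntil_subset hz hy)⟩

lemma ReachIn.adj {s : Finset V} {a u w : V} (h : ReachIn G s a u) (huw : G.Adj u w)
    (hw : w ∈ s) : ReachIn G s a w := by
  obtain ⟨p, hp⟩ := h
  refine ⟨p.append (Walk.cons huw Walk.nil), ?_⟩
  intro z hz
  rw [Walk.mem_support_append_iff] at hz
  rcases hz with hz | hz
  · exact hp z hz
  · simp only [Walk.support_cons, Walk.support_nil, List.mem_cons, List.mem_singleton] at hz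
    rcases hz with rfl | hz
    · exact hp z p.end_mem_support
    · rcases hz with rfl | hz
      · exact hw
      · simp at hz

lemma ReachIn.trans {s : Finset V} {a u w : V} (h : ReachIn G s a u)
    (h' : ReachIn G s u w) : ReachIn G s a w := by
  obtain ⟨p, hp⟩ := h
  obtain ⟨q, hq⟩ := h'
  refine ⟨p.append q, ?_⟩
  intro z hz
  rw [Walk.mem_support_append_iff] at hz
  exact hz.elim (hp z) (hq z)

/-- A chord of a path allows to shortcut it. -/
lemma exists_shortcut {x y : V} (P : G.Walk x y) (hP : P.IsPath) :
    ∀ u w, u ∈ P.support → w ∈ P.support → G.Adj u w → s(u, w) ∉ P.edges →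
    ∃ Q : G.Walk x y, Q.length < P.length ∧ ∀ z ∈ Q.support, z ∈ P.support := by
  induction P with
  | nil =>
    intro u w hu hw huw _
    simp only [Walk.support_nil, List.mem_singleton] at hu hw
    subst hu; subst hw
    exact absurd huw (G.loopless.irrefl _)
  | @cons x x₁ y h p ih =>
    -- helper for the asymmetric case u = x
    intro u w hu hw huw he
    simp only [Walk.support_cons, List.mem_cons] at hu hw
    have hcase : ∀ w', w' ∈ p.support → G.Adj x w' → s(x, w') ∉ (Walk.cons h p).edges →
        ∃ Q : G.Walk x y, Q.length < (Walk.cons h p).length ∧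
          ∀ z ∈ Q.support, z ∈ (Walk.cons h p).support := by
      intro w' hw' hxw' he'
      refine ⟨Walk.cons hxw' (p.dropUntil w' hw'), ?_, ?_⟩
      · have hsplit := congrArg Walk.length (p.take_spec hw')
        rw [Walk.length_append] at hsplit
        have hpos : 0 < (p.takeUntil w' hw').length := by
          rcases Nat.eq_zero_or_pos (p.takeUntil w' hw').length with h0 | h0
          · exfalso
            have : x₁ = w' := Walk.eq_of_length_eq_zero h0
            subst this
            exact he' (by simp [Walk.edges_cons])
          · exact h0
        simp only [Walk.length_cons]
        omega
      · intro z hz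
        simp only [Walk.support_cons, List.mem_cons] at hz ⊢
        rcases hz with rfl | hz
        · exact Or.inl rfl
        · exact Or.inr (p.support_dropUntil_subset hw' hz)
    rcases hu with rfl | hu
    · rcases hw with rfl | hw
      · exact absurd huw (G.loopless.irrefl _)
      · exact hcase w hw huw he
    · rcases hw with rfl | hw
      · have := hcase u hu huw.symm (by rwa [Sym2.eq_swap])
        exact this
      · obtain ⟨Q', hQ'len, hQ'supp⟩ := ih hP.of_cons u w hu hw huw
          (fun hc => he (by simp [Walk.edges_cons, hc]))
        refine ⟨Walk.cons h Q', by simpa using hQ'len, ?_⟩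
        intro z hz
        simp only [Walk.support_cons, List.mem_cons] at hz ⊢
        exact hz.imp id (hQ'supp z)

/-- Existence of a minimal "induced" path through a vertex property. -/
lemma exists_min_path (prop : V → Prop) {x y : V} (hxy : x ≠ y) (hnadj : ¬ G.Adj x y)
    (W : G.Walk x y) (hW : ∀ z ∈ W.support, prop z) :
    ∃ P : G.Walk x y, P.IsPath ∧ (∀ z ∈ P.support, prop z) ∧ 2 ≤ P.length ∧
      ∀ u w, u ∈ P.support → w ∈ P.support → G.Adj u w → s(u, w) ∈ P.edges := by
  classical
  have hex : ∃ n, ∃ P : G.Walk x y, P.length = n ∧ P.IsPath ∧ ∀ z ∈ P.support, prop z :=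
    ⟨W.bypass.length, W.bypass, rfl, W.bypass_isPath,
      fun z hz => hW z (W.support_bypass_subset hz)⟩
  obtain ⟨P, hlen, hpath, hprop⟩ := Nat.find_spec hex
  refine ⟨P, hpath, hprop, ?_, ?_⟩
  · rcases Nat.lt_or_ge P.length 2 with hlt | hge
    · interval_cases h : P.length
      · exact absurd (Walk.eq_of_length_eq_zero h) hxy
      · exact absurd (Walk.adj_of_length_eq_one h) hnadj
    · exact hge
  · intro u w hu hw huw
    by_contra hne
    obtain ⟨Q, hQlen, hQsupp⟩ := exists_shortcut P hpath u w hu hw huw hne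
    have : ∃ P' : G.Walk x y, P'.length = Q.bypass.length ∧ P'.IsPath ∧
        ∀ z ∈ P'.support, prop z :=
      ⟨Q.bypass, rfl, Q.bypass_isPath,
        fun z hz => hprop z (hQsupp z (Q.support_bypass_subset hz))⟩
    have hge : Nat.find hex ≤ Q.bypass.length := Nat.find_le this
    have hb : Q.bypass.length ≤ Q.length := Q.length_bypass_le
    omega

lemma ReachIn.symm {s : Finset V} {a u : V} (h : ReachIn G s a u) : ReachIn G s u a := by
  obtain ⟨p, hp⟩ := h
  exact ⟨p.reverse, fun z hz => hp z (by rwa [Walk.support_reverse, List.mem_reverse] at hz)⟩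

/-- `T` separates `a` from `b` inside `S`. -/
def SepIn (G : SimpleGraph V) (S : Finset V) (a b : V) (T : Finset V) : Prop :=
  ∀ p : G.Walk a b, (∀ z ∈ p.support, z ∈ S) → ∃ z ∈ p.support, z ∈ T

lemma dirac_step (hG : G.IsChordal) :
    ∀ n (S : Finset V), S.card ≤ n →
    ∀ a b, a ∈ S → b ∈ S → a ≠ b → ¬ G.Adj a b →
      ∃ v w, v ∈ S ∧ w ∈ S ∧ SimplIn G S v ∧ SimplIn G S w ∧ v ≠ w ∧ ¬ G.Adj v w := by
  intro n
  induction n with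
  | zero =>
    intro S hS a b ha _ _ _
    rw [Nat.le_zero, Finset.card_eq_zero] at hS
    subst hS; simp at ha
  | succ n IH =>
    intro S hS a b ha hb hab hnadj
    classical
    -- `S \ {a, b}` separates `a` from `b` inside `S`
    have hS12 : SepIn G S a b ((S.erase a).erase b) := by
      intro p hp
      have hbp : p.bypass.IsPath := p.bypass_isPath
      obtain ⟨m, hm, q, hq⟩ := Walk.exists_eq_cons_of_ne hab p.bypass
      have hmS : m ∈ p.support := p.support_bypass_subset (by rw [hq]; simp)
      refine ⟨m, hmS, ?_⟩
      have hma : m ≠ a := by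
        intro h; subst h
        have := hbp.support_nodup
        rw [hq, Walk.support_cons] at this
        exact (List.nodup_cons.mp this).1 q.start_mem_support
      have hmb : m ≠ b := by
        intro h; subst h; exact hnadj hm
      simp only [Finset.mem_erase]
      exact ⟨hmb, hma, hp m hmS⟩
    -- a minimal separator T
    obtain ⟨T, hTmem, hTmin⟩ := Finset.exists_min_image
      (((S.erase a).erase b).powerset.filter fun T => SepIn G S a b T) Finset.card
      ⟨(S.erase a).erase b, by simp [hS12]⟩
    rw [Finset.mem_filter, Finset.mem_powerset] at hTmem
    obtain ⟨hTsub, hTsep⟩ := hTmem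
    have haT : a ∉ T := fun h => by simpa using (hTsub h)
    have hbT : b ∉ T := fun h => by simpa using (hTsub h)
    have hTS : T ⊆ S := hTsub.trans ((Finset.erase_subset _ _).trans (Finset.erase_subset _ _))
    -- the two components
    set A : Finset V := Finset.univ.filter (fun u => ReachIn G (S \ T) a u) with hA
    set B : Finset V := Finset.univ.filter (fun u => ReachIn G (S \ T) b u) with hB
    have memA : ∀ {u}, u ∈ A ↔ ReachIn G (S \ T) a u := by
      intro u; simp [hA]
    have memB : ∀ {u}, u ∈ B ↔ ReachIn G (S \ T) b u := by
      intro u; simp [hB]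
    have haS : a ∈ S \ T := Finset.mem_sdiff.mpr ⟨ha, haT⟩
    have hbS : b ∈ S \ T := Finset.mem_sdiff.mpr ⟨hb, hbT⟩
    have haA : a ∈ A := memA.mpr (ReachIn.refl haS)
    have hbB : b ∈ B := memB.mpr (ReachIn.refl hbS)
    have hAsub : ∀ {u}, u ∈ A → u ∈ S \ T := fun h => (memA.mp h).mem
    have hBsub : ∀ {u}, u ∈ B → u ∈ S \ T := fun h => (memB.mp h).mem
    have hAB : ∀ z, z ∈ A → z ∈ B → False := by
      intro z hzA hzB
      obtain ⟨p, hp⟩ := (memA.mp hzA).trans (memB.mp hzB).symm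
      obtain ⟨z', hz', hz'T⟩ := hTsep p (fun y hy => (Finset.mem_sdiff.mp (hp y hy)).1)
      exact (Finset.mem_sdiff.mp (hp z' hz')).2 hz'T
    have hAstep : ∀ {u w}, u ∈ A → G.Adj u w → w ∈ S \ T → w ∈ A :=
      fun hu huw hw => memA.mpr ((memA.mp hu).adj huw hw)
    have hBstep : ∀ {u w}, u ∈ B → G.Adj u w → w ∈ S \ T → w ∈ B :=
      fun hu huw hw => memB.mpr ((memB.mp hu).adj huw hw)
    have hABedge : ∀ {u w}, u ∈ A → w ∈ B → ¬ G.Adj u w := by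
      intro u w hu hw hadj
      exact hAB w (hAstep hu hadj (hBsub hw)) hw
    -- every x ∈ T has a neighbour in A and in B
    have nbr : ∀ x ∈ T, (∃ u ∈ A, G.Adj x u) ∧ (∃ u ∈ B, G.Adj x u) := by
      intro x hxT
      have hxa : x ≠ a := fun h => haT (h ▸ hxT)
      have hxb : x ≠ b := fun h => hbT (h ▸ hxT)
      -- T.erase x is not a separator
      have hnotsep : ¬ SepIn G S a b (T.erase x) := by
        intro hsep
        have hmem : T.erase x ∈ (((S.erase a).erase b).powerset.filter
            fun T => SepIn G S a b T) := by
          rw [Finset.mem_filter, Finset.mem_powerset]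
          exact ⟨(Finset.erase_subset _ _).trans hTsub, hsep⟩
        have := hTmin _ hmem
        have := Finset.card_erase_of_mem hxT
        have : 0 < T.card := Finset.card_pos.mpr ⟨x, hxT⟩
        omega
      rw [SepIn] at hnotsep
      push_neg at hnotsep
      obtain ⟨p, hpS, hpavoid⟩ := hnotsep
      set p' := p.bypass with hp'
      have hp'path : p'.IsPath := p.bypass_isPath
      have hp'S : ∀ z ∈ p'.support, z ∈ S := fun z hz => hpS z (p.support_bypass_subset hz)
      have hp'avoid : ∀ z ∈ p'.support, z ∉ T.erase x :=
        fun z hz => hpavoid z (p.support_bypass_subset hz)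
      obtain ⟨z, hz, hzT⟩ := hTsep p' hp'S
      have hzx : z = x := by
        by_contra hne
        exact hp'avoid z hz (Finset.mem_erase.mpr ⟨hne, hzT⟩)
      subst hzx
      constructor
      · -- A side, via the prefix of p'
        set q := (p'.takeUntil z hz).reverse with hqdef
        have hqpath : q.IsPath := (hp'path.takeUntil hz).reverse
        obtain ⟨u, hadj, r, hr⟩ := Walk.exists_eq_cons_of_ne hxa q
        have hrsupp : ∀ y ∈ r.support, y ∈ p'.support := by
          intro y hy
          have : y ∈ q.support := by rw [hr, Walk.support_cons]; exact List.mem_cons_of_mem _ hy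
          rw [hqdef, Walk.support_reverse, List.mem_reverse] at this
          exact p'.support_takeUntil_subset hz this
        have hznr : z ∉ r.support := by
          have := hqpath.support_nodup
          rw [hr, Walk.support_cons, List.nodup_cons] at this
          exact this.1
        have hrST : ∀ y ∈ r.support, y ∈ S \ T := by
          intro y hy
          refine Finset.mem_sdiff.mpr ⟨hp'S y (hrsupp y hy), fun hyT => ?_⟩
          exact hp'avoid y (hrsupp y hy)
            (Finset.mem_erase.mpr ⟨fun h => hznr (h ▸ hy), hyT⟩)
        refine ⟨u, memA.mpr ⟨r.reverse, ?_⟩, hadj⟩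
        intro y hy
        rw [Walk.support_reverse, List.mem_reverse] at hy
        exact hrST y hy
      · -- B side, via the suffix of p'
        set q := p'.dropUntil z hz with hqdef
        have hqpath : q.IsPath := hp'path.dropUntil hz
        obtain ⟨u, hadj, r, hr⟩ := Walk.exists_eq_cons_of_ne hxb q
        have hrsupp : ∀ y ∈ r.support, y ∈ p'.support := by
          intro y hy
          have : y ∈ q.support := by rw [hr, Walk.support_cons]; exact List.mem_cons_of_mem _ hy
          exact p'.support_dropUntil_subset hz this
        have hznr : z ∉ r.support := by
          have := hqpath.support_nodup
          rw [hr, Walk.support_cons, List.nodup_cons] at this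
          exact this.1
        have hrST : ∀ y ∈ r.support, y ∈ S \ T := by
          intro y hy
          refine Finset.mem_sdiff.mpr ⟨hp'S y (hrsupp y hy), fun hyT => ?_⟩
          exact hp'avoid y (hrsupp y hy)
            (Finset.mem_erase.mpr ⟨fun h => hznr (h ▸ hy), hyT⟩)
        refine ⟨u, memB.mpr ⟨r.reverse, ?_⟩, hadj⟩
        intro y hy
        rw [Walk.support_reverse, List.mem_reverse] at hy
        exact hrST y hy
    -- T is a clique
    have hclT : ∀ x ∈ T, ∀ y ∈ T, x ≠ y → G.Adj x y := by
      intro x hxT y hyT hxyne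
      by_contra hnxy
      have hxA : x ∉ A := fun h => (Finset.mem_sdiff.mp (hAsub h)).2 hxT
      have hyA : y ∉ A := fun h => (Finset.mem_sdiff.mp (hAsub h)).2 hyT
      have hxB : x ∉ B := fun h => (Finset.mem_sdiff.mp (hBsub h)).2 hxT
      have hyB : y ∉ B := fun h => (Finset.mem_sdiff.mp (hBsub h)).2 hyT
      obtain ⟨⟨xa, hxaA, hxadj⟩, ⟨xb, hxbB, hxbadj⟩⟩ := nbr x hxT
      obtain ⟨⟨ya, hyaA, hyadj⟩, ⟨yb, hybB, hybadj⟩⟩ := nbr y hyT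
      -- a walk from x to y with interior in A
      obtain ⟨r1, hr1⟩ := memA.mp hxaA
      obtain ⟨r2, hr2⟩ := memA.mp hyaA
      have hWA : ∃ WA : G.Walk x y, ∀ z ∈ WA.support, z = x ∨ z = y ∨ z ∈ A := by
        refine ⟨Walk.cons hxadj ((r1.reverse.append r2).append
          (Walk.cons hyadj.symm Walk.nil)), ?_⟩
        intro z hz
        simp only [Walk.support_cons, List.mem_cons, Walk.mem_support_append_iff,
          Walk.support_reverse, List.mem_reverse, Walk.support_nil, List.mem_singleton] at hz
        rcases hz with rfl | (hz | hz) | (rfl | rfl | hz)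
        · exact Or.inl rfl
        · exact Or.inr (Or.inr (memA.mpr (ReachIn.of_mem_support hr1 hz)))
        · exact Or.inr (Or.inr (memA.mpr (ReachIn.of_mem_support hr2 hz)))
        · exact Or.inr (Or.inr hyaA)
        · exact Or.inr (Or.inl rfl)
        · simp at hz
      obtain ⟨r3, hr3⟩ := memB.mp hxbB
      obtain ⟨r4, hr4⟩ := memB.mp hybB
      have hWB : ∃ WB : G.Walk x y, ∀ z ∈ WB.support, z = x ∨ z = y ∨ z ∈ B := by
        refine ⟨Walk.cons hxbadj ((r3.reverse.append r4).append
          (Walk.cons hybadj.symm Walk.nil)), ?_⟩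
        intro z hz
        simp only [Walk.support_cons, List.mem_cons, Walk.mem_support_append_iff,
          Walk.support_reverse, List.mem_reverse, Walk.support_nil, List.mem_singleton] at hz
        rcases hz with rfl | (hz | hz) | (rfl | rfl | hz)
        · exact Or.inl rfl
        · exact Or.inr (Or.inr (memB.mpr (ReachIn.of_mem_support hr3 hz)))
        · exact Or.inr (Or.inr (memB.mpr (ReachIn.of_mem_support hr4 hz)))
        · exact Or.inr (Or.inr hybB)
        · exact Or.inr (Or.inl rfl)
        · simp at hz
      obtain ⟨WA, hWAsupp⟩ := hWA
      obtain ⟨WB, hWBsupp⟩ := hWB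
      obtain ⟨PA, hPApath, hPAsupp, hPAlen, hPAchord⟩ :=
        exists_min_path (fun z => z = x ∨ z = y ∨ z ∈ A) hxyne hnxy WA hWAsupp
      obtain ⟨PB, hPBpath, hPBsupp, hPBlen, hPBchord⟩ :=
        exists_min_path (fun z => z = x ∨ z = y ∨ z ∈ B) hxyne hnxy WB hWBsupp
      set c : G.Walk x x := PA.append PB.reverse with hc
      have hclen : 4 ≤ c.length := by
        rw [hc, Walk.length_append, Walk.length_reverse]; omega
      have hcross : ∀ z, z ∈ PA.support → z ∈ PB.support → z = x ∨ z = y := by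
        intro z h1 h2
        rcases hPAsupp z h1 with rfl | rfl | hzA
        · exact Or.inl rfl
        · exact Or.inr rfl
        rcases hPBsupp z h2 with rfl | rfl | hzB
        · exact Or.inl rfl
        · exact Or.inr rfl
        · exact absurd (hAB z hzA hzB) not_false
      have hcyc : c.IsCycle := by
        refine ⟨⟨⟨?_⟩, ?_⟩, ?_⟩
        · -- edges nodup
          rw [hc, Walk.edges_append, Walk.edges_reverse]
          rw [List.nodup_append]
          refine ⟨hPApath.isTrail.edges_nodup,
            List.nodup_reverse.mpr hPBpath.isTrail.edges_nodup, ?_⟩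
          intro e he e2 he' hee
          subst hee
          rw [List.mem_reverse] at he'
          induction e with
          | h p q =>
            have hpq : G.Adj p q := PA.adj_of_mem_edges he
            have hp1 : p ∈ PA.support := PA.fst_mem_support_of_mem_edges he
            have hq1 : q ∈ PA.support := PA.snd_mem_support_of_mem_edges he
            have hp2 : p ∈ PB.support := PB.fst_mem_support_of_mem_edges he'
            have hq2 : q ∈ PB.support := PB.snd_mem_support_of_mem_edges he'
            rcases hcross p hp1 hp2 with rfl | rfl <;>
              rcases hcross q hq1 hq2 with rfl | rfl
            · exact hpq.ne rfl
            · exact hnxy hpq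
            · exact hnxy hpq.symm
            · exact hpq.ne rfl
        · -- not nil
          intro h
          rw [h] at hclen
          simp at hclen
        · -- support tail nodup
          rw [hc, Walk.tail_support_append]
          have hxPA : x ∉ PA.support.tail := by
            have h1 := hPApath.support_nodup
            rw [PA.support_eq_cons, List.nodup_cons] at h1
            exact h1.1
          have hyPB : y ∉ PB.reverse.support.tail := by
            have h1 := hPBpath.reverse.support_nodup
            rw [PB.reverse.support_eq_cons, List.nodup_cons] at h1
            exact h1.1
          rw [List.nodup_append]
          refine ⟨(hPApath.support_nodup).tail, (hPBpath.reverse.support_nodup).tail, ?_⟩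
          intro z hz z2 hz' hzz
          subst hzz
          have hzA : z ∈ PA.support := List.mem_of_mem_tail hz
          have hzB : z ∈ PB.support := by
            have := List.mem_of_mem_tail hz'
            rwa [Walk.support_reverse, List.mem_reverse] at this
          rcases hcross z hzA hzB with rfl | rfl
          · exact hxPA hz
          · exact hyPB hz'
      obtain ⟨u, w, hu, hw, huw, hnc⟩ := hG x c hcyc hclen
      have hmemc : ∀ {z}, z ∈ c.support → z ∈ PA.support ∨ z ∈ PB.support := by
        intro z hz
        rw [hc, Walk.mem_support_append_iff] at hz
        rcases hz with hz | hz
        · exact Or.inl hz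
        · rw [Walk.support_reverse, List.mem_reverse] at hz
          exact Or.inr hz
      have hsubA : ∀ {p q}, p ∈ PA.support → q ∈ PA.support → G.Adj p q →
          c.toSubgraph.Adj p q := by
        intro p q h1 h2 hadj
        have : s(p, q) ∈ PA.edges := hPAchord p q h1 h2 hadj
        rw [hc, Walk.toSubgraph_append]
        exact Subgraph.sup_adj.mpr
          (Or.inl (Subgraph.mem_edgeSet.mp (PA.mem_edges_toSubgraph.mpr this)))
      have hsubB : ∀ {p q}, p ∈ PB.support → q ∈ PB.support → G.Adj p q →
          c.toSubgraph.Adj p q := by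
        intro p q h1 h2 hadj
        have : s(p, q) ∈ PB.edges := hPBchord p q h1 h2 hadj
        rw [hc, Walk.toSubgraph_append, Walk.toSubgraph_reverse]
        exact Subgraph.sup_adj.mpr
          (Or.inr (Subgraph.mem_edgeSet.mp (PB.mem_edges_toSubgraph.mpr this)))
      rcases hmemc hu with huA | huB <;> rcases hmemc hw with hwA | hwB
      · exact hnc (hsubA huA hwA huw)
      · -- u on PA, w on PB
        by_cases hu2 : u ∈ PB.support
        · exact hnc (hsubB hu2 hwB huw)
        by_cases hw2 : w ∈ PA.support
        · exact hnc (hsubA huA hw2 huw)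
        have huA' : u ∈ A := by
          rcases hPAsupp u huA with rfl | rfl | h
          · exact absurd PB.start_mem_support hu2
          · exact absurd PB.end_mem_support hu2
          · exact h
        have hwB' : w ∈ B := by
          rcases hPBsupp w hwB with rfl | rfl | h
          · exact absurd PA.start_mem_support hw2
          · exact absurd PA.end_mem_support hw2
          · exact h
        exact hABedge huA' hwB' huw
      · by_cases hu2 : u ∈ PA.support
        · exact hnc (hsubA hu2 hwA huw)
        by_cases hw2 : w ∈ PB.support
        · exact hnc ((hsubB hw2 huB huw.symm).symm)
        have huB' : u ∈ B := by
          rcases hPBsupp u huB with rfl | rfl | h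
          · exact absurd PA.start_mem_support hu2
          · exact absurd PA.end_mem_support hu2
          · exact h
        have hwA' : w ∈ A := by
          rcases hPAsupp w hwA with rfl | rfl | h
          · exact absurd PB.start_mem_support hw2
          · exact absurd PB.end_mem_support hw2
          · exact h
        exact hABedge hwA' huB' huw.symm
      · exact hnc (hsubB huB hwB huw)
    -- extraction of a simplicial vertex on each side
    have side : ∀ (c : V) (C : Finset V),
        (∀ {u}, u ∈ C ↔ ReachIn G (S \ T) c u) → c ∈ C → b ∉ C ∪ T →
        ∃ v ∈ C, SimplIn G S v := by
      intro c C memC hcC hbCT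
      have hCsub : ∀ {u}, u ∈ C → u ∈ S \ T := fun h => (memC.mp h).mem
      have hCT : C ∪ T ⊆ S := by
        intro z hz
        rcases Finset.mem_union.mp hz with hz | hz
        · exact (Finset.mem_sdiff.mp (hCsub hz)).1
        · exact hTS hz
      have hcard : (C ∪ T).card ≤ n := by
        have hss : C ∪ T ⊂ S := Finset.ssubset_iff_of_subset hCT |>.mpr ⟨b, hb, hbCT⟩
        have := Finset.card_lt_card hss
        omega
      have hCstep : ∀ {u w}, u ∈ C → G.Adj u w → w ∈ S \ T → w ∈ C :=
        fun hu huw hw => memC.mpr ((memC.mp hu).adj huw hw)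
      have hnbhd : ∀ {v z}, v ∈ C → z ∈ S → G.Adj v z → z ∈ C ∪ T := by
        intro v z hv hz hadj
        by_cases hzT : z ∈ T
        · exact Finset.mem_union_right _ hzT
        · exact Finset.mem_union_left _ (hCstep hv hadj (Finset.mem_sdiff.mpr ⟨hz, hzT⟩))
      have hget : ∃ v ∈ C, SimplIn G (C ∪ T) v := by
        by_cases hcl : ∀ u ∈ C ∪ T, ∀ w ∈ C ∪ T, u ≠ w → G.Adj u w
        · exact ⟨c, hcC, fun u hu w hw _ _ hne => hcl u hu w hw hne⟩
        · push_neg at hcl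
          obtain ⟨a', ha', b', hb', hne', hnadj'⟩ := hcl
          obtain ⟨v, w, hvCT, hwCT, hvS, hwS, hvw, hvwadj⟩ :=
            IH (C ∪ T) hcard a' b' ha' hb' hne' hnadj'
          rcases Finset.mem_union.mp hvCT with hvC | hvT
          · exact ⟨v, hvC, hvS⟩
          rcases Finset.mem_union.mp hwCT with hwC | hwT
          · exact ⟨w, hwC, hwS⟩
          · exact absurd (hclT v hvT w hwT hvw) hvwadj
      obtain ⟨v, hvC, hvS⟩ := hget
      refine ⟨v, hvC, ?_⟩
      intro u hu w hw h1 h2 hne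
      exact hvS (hnbhd hvC hu h1) (hnbhd hvC hw h2) h1 h2 hne
    have hbAT : b ∉ A ∪ T := by
      intro h
      rcases Finset.mem_union.mp h with h | h
      · exact hAB b h hbB
      · exact hbT h
    have haBT : a ∉ B ∪ T := by
      intro h
      rcases Finset.mem_union.mp h with h | h
      · exact hAB a haA h
      · exact haT h
    obtain ⟨v, hvA, hvS⟩ := side a A memA haA hbAT
    have sideB : ∃ w ∈ B, SimplIn G S w := by
      -- reuse side with roles of a, b …: side was stated with b; redo for B with a
      have hCsub : ∀ {u}, u ∈ B → u ∈ S \ T := fun h => (memB.mp h).mem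
      have hCT : B ∪ T ⊆ S := by
        intro z hz
        rcases Finset.mem_union.mp hz with hz | hz
        · exact (Finset.mem_sdiff.mp (hCsub hz)).1
        · exact hTS hz
      have hcard : (B ∪ T).card ≤ n := by
        have hss : B ∪ T ⊂ S := Finset.ssubset_iff_of_subset hCT |>.mpr ⟨a, ha, haBT⟩
        have := Finset.card_lt_card hss
        omega
      have hnbhd : ∀ {v z}, v ∈ B → z ∈ S → G.Adj v z → z ∈ B ∪ T := by
        intro v z hv hz hadj
        by_cases hzT : z ∈ T
        · exact Finset.mem_union_right _ hzT
        · exact Finset.mem_union_left _ (hBstep hv hadj (Finset.mem_sdiff.mpr ⟨hz, hzT⟩))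
      have hget : ∃ v ∈ B, SimplIn G (B ∪ T) v := by
        by_cases hcl : ∀ u ∈ B ∪ T, ∀ w ∈ B ∪ T, u ≠ w → G.Adj u w
        · exact ⟨b, hbB, fun u hu w hw _ _ hne => hcl u hu w hw hne⟩
        · push_neg at hcl
          obtain ⟨a', ha', b', hb', hne', hnadj'⟩ := hcl
          obtain ⟨v, w, hvCT, hwCT, hvS, hwS, hvw, hvwadj⟩ :=
            IH (B ∪ T) hcard a' b' ha' hb' hne' hnadj'
          rcases Finset.mem_union.mp hvCT with hvC | hvT
          · exact ⟨v, hvC, hvS⟩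
          rcases Finset.mem_union.mp hwCT with hwC | hwT
          · exact ⟨w, hwC, hwS⟩
          · exact absurd (hclT v hvT w hwT hvw) hvwadj
      obtain ⟨v, hvC, hvS'⟩ := hget
      refine ⟨v, hvC, ?_⟩
      intro u hu w hw h1 h2 hne
      exact hvS' (hnbhd hvC hu h1) (hnbhd hvC hw h2) h1 h2 hne
    obtain ⟨w, hwB, hwS⟩ := sideB
    refine ⟨v, w, (Finset.mem_sdiff.mp (hAsub hvA)).1, (Finset.mem_sdiff.mp (hBsub hwB)).1,
      hvS, hwS, ?_, hABedge hvA hwB⟩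
    intro h
    exact hAB v hvA (h ▸ hwB)

/-- Every nonempty subset of a chordal graph has a vertex simplicial within it. -/
lemma exists_simplicial (hG : G.IsChordal) (S : Finset V) (hne : S.Nonempty) :
    ∃ v ∈ S, SimplIn G S v := by
  classical
  by_cases hcl : ∀ u ∈ S, ∀ w ∈ S, u ≠ w → G.Adj u w
  · obtain ⟨v, hv⟩ := hne
    exact ⟨v, hv, fun u hu w hw _ _ hne' => hcl u hu w hw hne'⟩
  · push_neg at hcl
    obtain ⟨u, hu, w, hw, hne', hnadj⟩ := hcl
    obtain ⟨v, _, hvS, _, hsimp, _⟩ := dirac_step hG S.card S le_rfl u w hu hw hne' hnadj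
    exact ⟨v, hvS, hsimp⟩

lemma card_Sgn : Fintype.card Sgn = 2 := by decide

lemma sum_ite_eq_of_iff {α : Type*} [Fintype α] [DecidableEq α] (b : α) (φ : α → ℝ)
    (P : α → Prop) [DecidablePred P] (hP : ∀ h, P h ↔ h = b) :
    ∑ h : α, (if P h then φ h else 0) = φ b := by
  have heq : ∀ h, (if P h then φ h else 0) = (if h = b then φ h else 0) := by
    intro h
    by_cases hh : h = b
    · rw [if_pos ((hP h).mpr hh), if_pos hh]
    · rw [if_neg (fun c => hh ((hP h).mp c)), if_neg hh]
  rw [Finset.sum_congr rfl (fun h _ => heq h), Finset.sum_ite_eq' Finset.univ b φ]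
  simp

/-- Part B: every ND model on a chordal graph has a global joint distribution
whose marginals on cliques inside `S` agree with the model. -/
lemma exists_joint (hG : G.IsChordal) (M : NDModel G) :
    ∀ (n : ℕ) (S : Finset V), S.card ≤ n →
    ∃ q : (V → Sgn) → ℝ, (∀ a, 0 ≤ q a) ∧ (∑ a : V → Sgn, q a = 1) ∧
      ∀ C : Finset V, C ⊆ S → G.IsClique (C : Set V) → ∀ g : C → Sgn,
        M.p C g = ∑ a : V → Sgn, if (∀ x : C, a x.1 = g x) then q a else 0 := by
  classical
  intro n
  induction n with
  | zero =>
    intro S hS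
    rw [Nat.le_zero, Finset.card_eq_zero] at hS
    subst hS
    refine ⟨fun _ => (Fintype.card (V → Sgn) : ℝ)⁻¹, fun a => by positivity, ?_, ?_⟩
    · rw [Finset.sum_const, Finset.card_univ, nsmul_eq_mul]
      rw [mul_inv_cancel₀]
      exact_mod_cast Fintype.card_ne_zero
    · intro C hC hcl g
      rw [Finset.subset_empty] at hC
      subst hC
      have h1 : M.p (∅ : Finset V) g = 1 := by
        have := M.normalized ∅ (by simp)
        rw [Fintype.sum_unique] at this
        rwa [Subsingleton.elim g default]
      rw [h1]
      have : ∀ a : V → Sgn, (∀ x : ((∅ : Finset V) : Type _), a x.1 = g x) := by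
        intro a x
        exact absurd x.2 (Finset.notMem_empty _)
      rw [Finset.sum_congr rfl (fun a _ => if_pos (this a))]
      rw [Finset.sum_const, Finset.card_univ, nsmul_eq_mul]
      rw [mul_inv_cancel₀]
      exact_mod_cast Fintype.card_ne_zero
  | succ n IH =>
    intro S hS
    rcases S.eq_empty_or_nonempty with rfl | hne
    · exact IH ∅ (by simp)
    obtain ⟨v, hvS, hsimp⟩ := exists_simplicial hG S hne
    set S' := S.erase v with hS'
    have hS'card : S'.card ≤ n := by
      rw [hS', Finset.card_erase_of_mem hvS]
      have := Finset.card_pos.mpr hne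
      omega
    obtain ⟨q', hq'0, hq'1, hq'marg⟩ := IH S' hS'card
    set N : Finset V := S'.filter (fun u => G.Adj v u) with hN
    have hvN : v ∉ N := fun h => (Finset.mem_erase.mp (Finset.mem_filter.mp h).1).1 rfl
    have hNS' : N ⊆ S' := Finset.filter_subset _ _
    have hNadj : ∀ {u}, u ∈ N → G.Adj v u := fun h => (Finset.mem_filter.mp h).2
    have hNS : ∀ {u}, u ∈ N → u ∈ S := fun h => Finset.mem_of_mem_erase (hNS' h)
    have hNcl : G.IsClique (N : Set V) := by
      intro u hu w hw hne'
      simp only [Finset.coe_filter, Set.mem_setOf_eq, Finset.mem_coe] at hu hw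
      exact hsimp (hNS (Finset.mem_coe.mp hu)) (hNS (Finset.mem_coe.mp hw))
        (hNadj (Finset.mem_coe.mp hu)) (hNadj (Finset.mem_coe.mp hw)) hne'
    set D : Finset V := insert v N with hD
    have hDcl : G.IsClique (D : Set V) := by
      rw [hD, Finset.coe_insert]
      exact hNcl.insert (fun b hb hne' => hNadj (Finset.mem_coe.mp hb))
    -- extension of functions on N to D
    have hmemD : ∀ {x : V}, x ∈ D → x ≠ v → x ∈ N := by
      intro x hx hne'
      rcases Finset.mem_insert.mp hx with h | h
      · exact absurd h hne'
      · exact h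
    set ext : (N → Sgn) → Sgn → (D → Sgn) :=
      fun g s x => if hx : x.1 = v then s else g ⟨x.1, hmemD x.2 hx⟩ with hext
    have hextv : ∀ g s, ext g s ⟨v, Finset.mem_insert_self _ _⟩ = s := by
      intro g s; simp [hext]
    have hextN : ∀ g s (x : V) (hx : x ∈ N),
        ext g s ⟨x, Finset.mem_insert_of_mem hx⟩ = g ⟨x, hx⟩ := by
      intro g s x hx
      have : x ≠ v := fun h => hvN (h ▸ hx)
      simp [hext, this]
    -- fibered sum over D
    have hbij : Function.Bijective (fun gs : (N → Sgn) × Sgn => ext gs.1 gs.2) := by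
      constructor
      · rintro ⟨g1, s1⟩ ⟨g2, s2⟩ h
        dsimp only at h
        have hs : s1 = s2 := by
          have := congrFun h ⟨v, Finset.mem_insert_self _ _⟩
          rwa [hextv, hextv] at this
        have hg : g1 = g2 := by
          funext x
          have := congrFun h ⟨x.1, Finset.mem_insert_of_mem x.2⟩
          rwa [hextN _ _ _ x.2, hextN _ _ _ x.2] at this
        exact Prod.ext hg hs
      · intro f
        refine ⟨(fun x => f ⟨x.1, Finset.mem_insert_of_mem x.2⟩,
          f ⟨v, Finset.mem_insert_self _ _⟩), ?_⟩
        funext x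
        dsimp only
        by_cases hx : x.1 = v
        · simp only [hext, hx, dif_pos]
          exact congrArg f (Subtype.ext hx.symm)
        · simp only [hext, hx, dif_neg, not_false_iff]
    have hsumD : ∀ F : (D → Sgn) → ℝ,
        ∑ f : D → Sgn, F f = ∑ g : N → Sgn, ∑ s : Sgn, F (ext g s) := by
      intro F
      have h2 := Fintype.sum_bijective _ hbij
        (fun gs : (N → Sgn) × Sgn => F (ext gs.1 gs.2)) F (fun gs => rfl)
      rw [← h2, Fintype.sum_prod_type]
  -- marginal identity on N
    have margN : ∀ g : N → Sgn, M.p N g = ∑ s : Sgn, M.p D (ext g s) := by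
      intro g
      have := M.nodisturb N D (Finset.subset_insert _ _) hDcl g
      rw [hsumD] at this
      rw [this]
      have hcond : ∀ (g' : N → Sgn) (s : Sgn),
          (∀ x : N, ext g' s ⟨x.1, (Finset.subset_insert _ _) x.2⟩ = g x) ↔ g' = g := by
        intro g' s
        constructor
        · intro h
          funext x
          have := h x
          rwa [show (⟨x.1, (Finset.subset_insert v N) x.2⟩ : D)
            = ⟨x.1, Finset.mem_insert_of_mem x.2⟩ from rfl, hextN] at this
        · rintro rfl x
          rw [show (⟨x.1, (Finset.subset_insert v N) x.2⟩ : D)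
            = ⟨x.1, Finset.mem_insert_of_mem x.2⟩ from rfl, hextN]
      rw [Finset.sum_congr rfl (fun g' _ => Finset.sum_congr rfl (fun s _ => by
        rw [show (if (∀ x : N, ext g' s ⟨x.1, (Finset.subset_insert _ _) x.2⟩ = g x)
            then M.p D (ext g' s) else 0)
          = (if g' = g then M.p D (ext g' s) else 0) from by
            by_cases h : g' = g
            · rw [if_pos ((hcond g' s).mpr h), if_pos h]
            · rw [if_neg (fun hc => h ((hcond g' s).mp hc)), if_neg h]]))]
      rw [Finset.sum_comm]
      refine Finset.sum_congr rfl fun s _ => ?_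
      rw [Finset.sum_ite_eq' Finset.univ g (fun g' => M.p D (ext g' s))]
      simp
        -- the conditional distribution
    set r : Sgn → (N → Sgn) → ℝ :=
      fun s g => if M.p N g = 0 then 1/2 else M.p D (ext g s) / M.p N g with hr
    have hr0 : ∀ s g, 0 ≤ r s g := by
      intro s g
      rw [hr]
      dsimp only
      split
      · norm_num
      · exact div_nonneg (M.nonneg D hDcl _) (M.nonneg N hNcl _)
    have hrsum : ∀ g, ∑ s : Sgn, r s g = 1 := by
      intro g
      by_cases h : M.p N g = 0
      · simp only [hr, h, if_true, if_pos]
        rw [Finset.sum_const, Finset.card_univ, card_Sgn]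
        norm_num
      · simp only [hr, h, if_false]
        rw [← Finset.sum_div, ← margN g, div_self h]
    have hrmul : ∀ s g, r s g * M.p N g = M.p D (ext g s) := by
      intro s g
      by_cases h : M.p N g = 0
      · rw [h, mul_zero]
        symm
        have hsum0 : ∑ s : Sgn, M.p D (ext g s) = 0 := by rw [← margN g, h]
        exact (Finset.sum_eq_zero_iff_of_nonneg
          (fun s _ => M.nonneg D hDcl (ext g s))).mp hsum0 s (Finset.mem_univ s)
      · rw [hr]
        dsimp only
        rw [if_neg h, div_mul_cancel₀ _ h]
    -- the new joint distribution
    set q : (V → Sgn) → ℝ :=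
      fun a => (∑ s : Sgn, q' (Function.update a v s)) * r (a v) (fun x => a x.1) with hq
    -- master reindexing identity
    have hmaster : ∀ X : (V → Sgn) → ℝ,
        ∑ a : V → Sgn, (∑ s : Sgn, q' (Function.update a v s)) * X a
          = ∑ a : V → Sgn, q' a * ∑ s : Sgn, X (Function.update a v s) := by
      intro X
      have hinv : Function.Involutive
          (fun p : (V → Sgn) × Sgn => (Function.update p.1 v p.2, p.1 v)) := by
        rintro ⟨a, s⟩
        simp [Function.update_idem]
      calc ∑ a : V → Sgn, (∑ s : Sgn, q' (Function.update a v s)) * X a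
          = ∑ p : (V → Sgn) × Sgn, q' (Function.update p.1 v p.2) * X p.1 := by
            rw [Fintype.sum_prod_type]
            exact Finset.sum_congr rfl fun a _ => by rw [Finset.sum_mul]
        _ = ∑ p : (V → Sgn) × Sgn, q' p.1 * X (Function.update p.1 v p.2) := by
            rw [← Equiv.sum_comp hinv.toPerm (fun p : (V → Sgn) × Sgn =>
              q' (Function.update p.1 v p.2) * X p.1)]
            refine Finset.sum_congr rfl fun p _ => ?_
            simp only [Function.Involutive.coe_toPerm]
            rw [Function.update_idem, Function.update_eq_self]
        _ = ∑ a : V → Sgn, q' a * ∑ s : Sgn, X (Function.update a v s) := by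
            rw [Fintype.sum_prod_type]
            exact Finset.sum_congr rfl fun a _ => by rw [Finset.mul_sum]
    have hupdN : ∀ (a : V → Sgn) (s : Sgn),
        (fun x : N => (Function.update a v s) x.1) = (fun x : N => a x.1) := by
      intro a s
      funext x
      show Function.update a v s x.1 = a x.1
      rw [Function.update_of_ne (fun h => hvN (by rw [← h]; exact x.2))]
    have hupdv : ∀ (a : V → Sgn) (s : Sgn), (Function.update a v s) v = s :=
      fun a s => Function.update_self v s a
    refine ⟨q, ?_, ?_, ?_⟩
    · -- nonnegativity
      intro a
      exact mul_nonneg (Finset.sum_nonneg fun s _ => hq'0 _) (hr0 _ _)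
    · -- total mass
      have := hmaster (fun a => r (a v) (fun x : N => a x.1))
      rw [hq]
      dsimp only
      rw [this]
      rw [Finset.sum_congr rfl (fun a _ => by
        rw [Finset.sum_congr rfl (fun s _ => by rw [hupdN a s, hupdv a s]), hrsum])]
      simpa using hq'1
    · -- marginals
      intro C hCS hCcl g
      by_cases hvC : v ∈ C
      · -- the case v ∈ C : C ⊆ D
        have hCD : C ⊆ D := by
          intro x hx
          by_cases hxv : x = v
          · exact hxv ▸ Finset.mem_insert_self _ _
          · refine Finset.mem_insert_of_mem ?_
            rw [hN]
            refine Finset.mem_filter.mpr ⟨Finset.mem_erase.mpr ⟨hxv, hCS hx⟩, ?_⟩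
            exact hCcl (Finset.mem_coe.mpr hvC) (Finset.mem_coe.mpr hx) (Ne.symm hxv)
        set gv : Sgn := g ⟨v, hvC⟩ with hgv
        set compat : (N → Sgn) → Prop :=
          fun h => ∀ (x : C) (hxv : x.1 ≠ v), h ⟨x.1, hmemD (hCD x.2) hxv⟩ = g x with hcompat
        -- LHS: expand via nodisturb and hsumD
        have hLHS : M.p C g = ∑ h : N → Sgn,
            (if compat h then M.p D (ext h gv) else 0) := by
          rw [M.nodisturb C D hCD hDcl g, hsumD]
          refine Finset.sum_congr rfl fun h _ => ?_
          have hcond : ∀ s : Sgn,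
              (∀ x : C, ext h s ⟨x.1, hCD x.2⟩ = g x) ↔ (s = gv ∧ compat h) := by
            intro s
            constructor
            · intro hall
              constructor
              · have := hall ⟨v, hvC⟩
                rwa [show (⟨v, hCD hvC⟩ : {x // x ∈ D})
                  = ⟨v, Finset.mem_insert_self _ _⟩ from rfl, hextv] at this
              · intro x hxv
                have := hall x
                rwa [show (⟨x.1, hCD x.2⟩ : {x // x ∈ D})
                  = ⟨x.1, Finset.mem_insert_of_mem (hmemD (hCD x.2) hxv)⟩ from rfl,
                  hextN] at this
            · rintro ⟨rfl, hcomp⟩ x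
              by_cases hxv : x.1 = v
              · have hxx : x = ⟨v, hvC⟩ := Subtype.ext hxv
                subst hxx
                rw [show (⟨(⟨v, hvC⟩ : {x // x ∈ C}).1, hCD hvC⟩ : {x // x ∈ D})
                  = ⟨v, Finset.mem_insert_self _ _⟩ from rfl, hextv]
              · rw [show (⟨x.1, hCD x.2⟩ : {x // x ∈ D})
                  = ⟨x.1, Finset.mem_insert_of_mem (hmemD (hCD x.2) hxv)⟩ from rfl, hextN]
                exact hcomp x hxv
          by_cases hcm : compat h
          · have heq1 : ∀ s : Sgn, (∀ x : C, ext h s ⟨x.1, hCD x.2⟩ = g x) ↔ s = gv := by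
              intro s
              rw [hcond s]
              exact ⟨fun a => a.1, fun a => ⟨a, hcm⟩⟩
            rw [if_pos hcm]
            exact sum_ite_eq_of_iff gv (fun s => M.p D (ext h s))
              (fun s => ∀ x : C, ext h s ⟨x.1, hCD x.2⟩ = g x) heq1
          · rw [if_neg hcm]
            refine Finset.sum_eq_zero fun s _ => ?_
            rw [if_neg (fun hc => hcm ((hcond s).mp hc).2)]
        rw [hLHS]
        -- RHS: expand via hmaster
        have hRHS0 : ∀ a : V → Sgn, (if (∀ x : C, a x.1 = g x) then q a else 0)
            = (∑ s : Sgn, q' (Function.update a v s)) *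
              (if (∀ x : C, a x.1 = g x) then r (a v) (fun x : N => a x.1) else 0) := by
          intro a
          by_cases hc : ∀ x : C, a x.1 = g x
          · rw [if_pos hc, if_pos hc, hq]
          · rw [if_neg hc, if_neg hc, mul_zero]
        rw [Finset.sum_congr rfl (fun a _ => hRHS0 a),
          hmaster (fun a => if (∀ x : C, a x.1 = g x) then r (a v) (fun x : N => a x.1) else 0)]
        -- compute the inner sum over s
        have hinner : ∀ a : V → Sgn,
            (∑ s : Sgn, if (∀ x : C, (Function.update a v s) x.1 = g x)
                then r ((Function.update a v s) v) (fun x : N => (Function.update a v s) x.1)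
                else 0)
            = (if (∀ x : C, x.1 ≠ v → a x.1 = g x) then r gv (fun x : N => a x.1) else 0) := by
          intro a
          have hcond : ∀ s : Sgn, (∀ x : C, (Function.update a v s) x.1 = g x)
              ↔ (s = gv ∧ ∀ x : C, x.1 ≠ v → a x.1 = g x) := by
            intro s
            constructor
            · intro hall
              constructor
              · have := hall ⟨v, hvC⟩
                rwa [hupdv] at this
              · intro x hxv
                have := hall x
                rwa [Function.update_of_ne hxv] at this
            · rintro ⟨rfl, hrest⟩ x
              by_cases hxv : x.1 = v
              · have hxx : x = ⟨v, hvC⟩ := Subtype.ext hxv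
                subst hxx
                rw [hupdv]
              · rw [Function.update_of_ne hxv]
                exact hrest x hxv
          have hterm : ∀ s : Sgn, (if (∀ x : C, (Function.update a v s) x.1 = g x)
              then r ((Function.update a v s) v) (fun x : N => (Function.update a v s) x.1)
              else 0)
              = (if (s = gv ∧ ∀ x : C, x.1 ≠ v → a x.1 = g x)
                  then r s (fun x : N => a x.1) else 0) := by
            intro s
            by_cases hs : ∀ x : C, (Function.update a v s) x.1 = g x
            · rw [if_pos hs, if_pos ((hcond s).mp hs), hupdv, hupdN]
            · rw [if_neg hs, if_neg (fun c => hs ((hcond s).mpr c))]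
          rw [Finset.sum_congr rfl (fun s _ => hterm s)]
          by_cases hrest : ∀ x : C, x.1 ≠ v → a x.1 = g x
          · rw [if_pos hrest]
            exact sum_ite_eq_of_iff gv (fun s => r s (fun x : N => a x.1))
              (fun s => s = gv ∧ ∀ x : C, x.1 ≠ v → a x.1 = g x)
              (fun s => ⟨fun c => c.1, fun c => ⟨c, hrest⟩⟩)
          · rw [if_neg hrest]
            exact Finset.sum_eq_zero fun s _ => if_neg (fun c => hrest c.2)
        simp only [hinner]
        -- regroup the sum over a by the restriction to N
        have hstep1 : ∀ a : V → Sgn,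
            q' a * (if (∀ x : C, x.1 ≠ v → a x.1 = g x)
              then r gv (fun x : N => a x.1) else 0)
            = ∑ h : N → Sgn, (if (∀ x : N, a x.1 = h x)
                then (if compat h then r gv h * q' a else 0) else 0) := by
          intro a
          have hs2 := sum_ite_eq_of_iff (fun x : N => a x.1)
            (fun h => if compat h then r gv h * q' a else 0)
            (fun h => ∀ x : N, a x.1 = h x)
            (fun h => ⟨fun hh => funext fun x => (hh x).symm,
                       fun hh x => (congrFun hh x).symm⟩)
          rw [hs2]
          have hcr : compat (fun x : N => a x.1) ↔ (∀ x : C, x.1 ≠ v → a x.1 = g x) := Iff.rfl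
          by_cases hc : ∀ x : C, x.1 ≠ v → a x.1 = g x
          · rw [if_pos hc, if_pos (hcr.mpr hc), mul_comm]
          · rw [if_neg hc, if_neg (fun c => hc (hcr.mp c)), mul_zero]
        rw [Finset.sum_congr rfl (fun a _ => hstep1 a), Finset.sum_comm]
        refine Finset.sum_congr rfl fun h _ => ?_
        by_cases hcm : compat h
        · rw [if_pos hcm]
          have : ∀ a : V → Sgn, (if (∀ x : N, a x.1 = h x)
                then (if compat h then r gv h * q' a else 0) else 0)
              = r gv h * (if (∀ x : N, a x.1 = h x) then q' a else 0) := by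
            intro a
            by_cases hres : ∀ x : N, a x.1 = h x
            · rw [if_pos hres, if_pos hres, if_pos hcm]
            · rw [if_neg hres, if_neg hres, mul_zero]
          rw [Finset.sum_congr rfl (fun a _ => this a), ← Finset.mul_sum,
            ← hq'marg N hNS' hNcl h, hrmul]
        · rw [if_neg hcm]
          symm
          refine Finset.sum_eq_zero fun a _ => ?_
          by_cases hres : ∀ x : N, a x.1 = h x
          · rw [if_pos hres, if_neg hcm]
          · rw [if_neg hres]
      · -- the case v ∉ C : use the previous distribution
        have hCS' : C ⊆ S' := by
          intro x hx
          exact Finset.mem_erase.mpr ⟨fun h => hvC (by rw [← h]; exact hx), hCS hx⟩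
        rw [hq'marg C hCS' hCcl g]
        have hX : ∀ a : V → Sgn, (if (∀ x : C, a x.1 = g x) then q a else 0)
            = (∑ s : Sgn, q' (Function.update a v s)) *
              (if (∀ x : C, a x.1 = g x) then r (a v) (fun x : N => a x.1) else 0) := by
          intro a
          by_cases hc : ∀ x : C, a x.1 = g x
          · rw [if_pos hc, if_pos hc, hq]
          · rw [if_neg hc, if_neg hc, mul_zero]
        rw [Finset.sum_congr rfl (fun a _ => hX a),
          hmaster (fun a => if (∀ x : C, a x.1 = g x) then r (a v) (fun x : N => a x.1) else 0)]
        refine Finset.sum_congr rfl fun a _ => ?_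
        have hcond : ∀ s : Sgn, (∀ x : C, (Function.update a v s) x.1 = g x)
            ↔ (∀ x : C, a x.1 = g x) := by
          intro s
          constructor <;> intro h x
          · have := h x
            rwa [Function.update_of_ne (fun hh => hvC (by rw [← hh]; exact x.2))] at this
          · rw [Function.update_of_ne (fun hh => hvC (by rw [← hh]; exact x.2))]
            exact h x
        by_cases hc : ∀ x : C, a x.1 = g x
        · rw [if_pos hc]
          rw [Finset.sum_congr rfl (fun s _ => by
            rw [if_pos ((hcond s).mpr hc), hupdv, hupdN]), hrsum]
          rw [mul_one]
        · rw [if_neg hc]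
          rw [Finset.sum_congr rfl (fun s _ => by
            rw [if_neg (fun hh => hc ((hcond s).mp hh))]), Finset.sum_const]
          simp

lemma sum_ite_eq_of_iff' {α : Type*} [Fintype α] [DecidableEq α] (b : α) (φ : α → ℝ)
    (P : α → Prop) [DecidablePred P] (hP : ∀ h, P h ↔ h = b) :
    ∑ h : α, (if P h then φ h else 0) = φ b := by
  have heq : ∀ h, (if P h then φ h else 0) = (if h = b then φ h else 0) := by
    intro h
    by_cases hh : h = b
    · rw [if_pos ((hP h).mpr hh), if_pos hh]
    · rw [if_neg (fun c => hh ((hP h).mp c)), if_neg hh]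
  rw [Finset.sum_congr rfl (fun h _ => heq h), Finset.sum_ite_eq' Finset.univ b φ]
  simp

lemma restr_iff {C : Finset V} (a : V → Sgn) (f : C → Sgn) :
    (∀ x : C, a x.1 = f x) ↔ f = (fun x : C => a x.1) :=
  ⟨fun hh => funext fun x => (hh x).symm, fun hh x => (congrFun hh x).symm⟩

/-- the ND model obtained by mixing deterministic assignments according to `q`. -/
def mixModel (G : SimpleGraph V) (q : (V → Sgn) → ℝ) (h0 : ∀ a, 0 ≤ q a)
    (h1 : ∑ a : V → Sgn, q a = 1) : NDModel G where
  p C f := ∑ a : V → Sgn, if (∀ x : C, a x.1 = f x) then q a else 0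
  nonneg C _ f := Finset.sum_nonneg fun a _ => by
    by_cases h : ∀ x : C, a x.1 = f x
    · rw [if_pos h]; exact h0 a
    · rw [if_neg h]
  normalized C _ := by
    rw [Finset.sum_comm]
    rw [Finset.sum_congr rfl (fun a _ =>
      sum_ite_eq_of_iff' (fun x : C => a x.1) (fun _ => q a) _ (restr_iff a))]
    exact h1
  nodisturb C D hCD _ g := by
    show (∑ a : V → Sgn, if (∀ x : C, a x.1 = g x) then q a else 0)
      = ∑ f : D → Sgn, if (∀ x : C, f ⟨x.1, hCD x.2⟩ = g x)
          then (∑ a : V → Sgn, if (∀ x : D, a x.1 = f x) then q a else 0) else 0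
    have hpull : ∀ f : D → Sgn, (if (∀ x : C, f ⟨x.1, hCD x.2⟩ = g x)
          then (∑ a : V → Sgn, if (∀ x : D, a x.1 = f x) then q a else 0) else 0)
        = ∑ a : V → Sgn, (if (∀ x : D, a x.1 = f x)
            then (if (∀ x : C, f ⟨x.1, hCD x.2⟩ = g x) then q a else 0) else 0) := by
      intro f
      by_cases h1' : ∀ x : C, f ⟨x.1, hCD x.2⟩ = g x
      · rw [if_pos h1']
        exact Finset.sum_congr rfl fun a _ => by rw [if_pos h1']
      · rw [if_neg h1']
        symm
        refine Finset.sum_eq_zero fun a _ => ?_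
        rw [if_neg h1', ite_self]
    rw [Finset.sum_congr rfl fun f _ => hpull f, Finset.sum_comm]
    refine Finset.sum_congr rfl fun a _ => ?_
    rw [sum_ite_eq_of_iff' (fun x : D => a x.1)
      (fun f => if (∀ x : C, f ⟨x.1, hCD x.2⟩ = g x) then q a else 0) _ (restr_iff a)]

lemma mixModel_p (G : SimpleGraph V) (q : (V → Sgn) → ℝ) (h0 : ∀ a, 0 ≤ q a)
    (h1 : ∑ a : V → Sgn, q a = 1) (C : Finset V) (f : C → Sgn) :
    (mixModel G q h0 h1).p C f = ∑ a : V → Sgn, if (∀ x : C, a x.1 = f x) then q a else 0 :=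
  rfl

/-- expectation of a function of the outcomes on `C` against the joint distribution. -/
lemma marg_expect {G : SimpleGraph V} (M : NDModel G) (C : Finset V) (q : (V → Sgn) → ℝ)
    (hm : ∀ g : C → Sgn, M.p C g = ∑ a : V → Sgn, if (∀ x : C, a x.1 = g x) then q a else 0)
    (φ : (C → Sgn) → ℝ) :
    ∑ f : C → Sgn, φ f * M.p C f = ∑ a : V → Sgn, q a * φ (fun x => a x.1) := by
  rw [Finset.sum_congr rfl (fun f _ => by rw [hm f, Finset.mul_sum])]
  rw [Finset.sum_comm]
  refine Finset.sum_congr rfl fun a _ => ?_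
  have hterm : ∀ f : C → Sgn, φ f * (if (∀ x : C, a x.1 = f x) then q a else 0)
      = (if (∀ x : C, a x.1 = f x) then (q a * φ f) else 0) := by
    intro f
    by_cases h : ∀ x : C, a x.1 = f x
    · rw [if_pos h, if_pos h, mul_comm]
    · rw [if_neg h, if_neg h, mul_zero]
  rw [Finset.sum_congr rfl (fun f _ => hterm f)]
  exact sum_ite_eq_of_iff' (fun x : C => a x.1) (fun f => q a * φ f) _ (restr_iff a)

lemma mean_eq {G : SimpleGraph V} (M : NDModel G) (q : (V → Sgn) → ℝ) (v : V)
    (hm : ∀ g : ({v} : Finset V) → Sgn, M.p {v} g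
      = ∑ a : V → Sgn, if (∀ x : ({v} : Finset V), a x.1 = g x) then q a else 0) :
    M.mean v = ∑ a : V → Sgn, q a * ((a v : ℤ) : ℝ) :=
  marg_expect M {v} q hm (fun f => ((f ⟨v, by simp⟩ : ℤ) : ℝ))

lemma prod_pairFinset (a : V → Sgn) (e : Sym2 V) (hd : ¬ e.IsDiag) :
    (∏ x : ↥(pairFinset e), ((a x.1 : ℤ))) = edgeTerm a e := by
  induction e with
  | h u w =>
    have hne : u ≠ w := by simpa using hd
    rw [show edgeTerm a s(u, w) = (a u : ℤ) * (a w : ℤ) from rfl]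
    rw [show (∏ x : ↥(pairFinset s(u, w)), ((a x.1 : ℤ)))
        = ∏ x ∈ ({u, w} : Finset V), (a x : ℤ) from
      Finset.prod_coe_sort ({u, w} : Finset V) (fun v => ((a v : ℤ)))]
    exact Finset.prod_pair hne

lemma corrE_eq {G : SimpleGraph V} (M : NDModel G) (q : (V → Sgn) → ℝ) (e : Sym2 V)
    (hm : ∀ g : ↥(pairFinset e) → Sgn, M.p (pairFinset e) g
      = ∑ a : V → Sgn, if (∀ x : ↥(pairFinset e), a x.1 = g x) then q a else 0)
    (hd : ¬ e.IsDiag) :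
    M.corrE e = ∑ a : V → Sgn, q a * ((edgeTerm a e : ℤ) : ℝ) := by
  rw [NDModel.corrE, marg_expect M (pairFinset e) q hm
    (fun f => ((∏ x : ↥(pairFinset e), (f x : ℤ) : ℤ) : ℝ))]
  refine Finset.sum_congr rfl fun a _ => ?_
  congr 1
  exact congrArg (fun z : ℤ => (z : ℝ)) (prod_pairFinset a e hd)

lemma delta_sum (a0 : V → Sgn) (X : (V → Sgn) → ℝ) :
    ∑ a : V → Sgn, (if a = a0 then (1 : ℝ) else 0) * X a = X a0 := by
  have hterm : ∀ a : V → Sgn, (if a = a0 then (1 : ℝ) else 0) * X a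
      = (if a = a0 then X a else 0) := by
    intro a
    by_cases h : a = a0
    · rw [if_pos h, if_pos h, one_mul]
    · rw [if_neg h, if_neg h, zero_mul]
  rw [Finset.sum_congr rfl (fun a _ => hterm a), Finset.sum_ite_eq' Finset.univ a0 X]
  simp

lemma pair_clique {G : SimpleGraph V} [DecidableRel G.Adj] {e : Sym2 V} (he : e ∈ G.edgeFinset) :
    G.IsClique ((pairFinset e : Finset V) : Set V) := by
  rw [SimpleGraph.mem_edgeFinset] at he
  induction e with
  | h u w =>
    rw [show pairFinset s(u, w) = ({u, w} : Finset V) from rfl]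
    rw [Finset.coe_insert, Finset.coe_singleton]
    exact SimpleGraph.isClique_pair.mpr (fun _ => he)

lemma singleton_clique {G : SimpleGraph V} (v : V) :
    G.IsClique ((({v} : Finset V) : Finset V) : Set V) := by
  rw [Finset.coe_singleton]
  exact G.isClique_singleton v


/-- On a finite *chordal* commutation graph `G`, the maximum over
all no-disturbance models of the expression
`Σ_{v∈V} α(v)⟨v⟩ + Σ_{{u,v}∈E(G)} β({u,v})⟨uv⟩` is exactly the classical value,
i.e. the maximum over deterministic `±1`-valued assignments `a` of
`E(a) = Σ_v α(v)a(v) + Σ_{{u,v}∈E(G)} β({u,v})a(u)a(v)`. -/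
theorem chordal_ND_value_eq_classical_value
    (G : SimpleGraph V) [DecidableRel G.Adj] (hG : G.IsChordal)
    (α : V → ℝ) (β : Sym2 V → ℝ) :
    IsGreatest
      {x : ℝ | ∃ M : NDModel G,
        x = ∑ v, α v * M.mean v + ∑ e ∈ G.edgeFinset, β e * M.corrE e}
      (Finset.univ.sup' Finset.univ_nonempty
        (fun a : V → Sgn =>
          ∑ v, α v * ((a v : ℤ) : ℝ)
            + ∑ e ∈ G.edgeFinset, β e * ((edgeTerm a e : ℤ) : ℝ))) := by
  classical
  set E : (V → Sgn) → ℝ := fun a =>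
    ∑ v, α v * ((a v : ℤ) : ℝ) + ∑ e ∈ G.edgeFinset, β e * ((edgeTerm a e : ℤ) : ℝ)
    with hE
  constructor
  · -- the classical value is attained by a deterministic model
    obtain ⟨a0, _, ha0⟩ := Finset.exists_mem_eq_sup' Finset.univ_nonempty E
    set q0 : (V → Sgn) → ℝ := fun a => if a = a0 then 1 else 0 with hq0
    have h00 : ∀ a, 0 ≤ q0 a := by
      intro a
      rw [hq0]
      dsimp only
      split <;> norm_num
    have h01 : ∑ a : V → Sgn, q0 a = 1 := by
      rw [hq0]
      rw [Finset.sum_ite_eq' Finset.univ a0 (fun _ => (1 : ℝ))]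
      simp
    refine ⟨mixModel G q0 h00 h01, ?_⟩
    rw [ha0]
    have hmean : ∀ v, (mixModel G q0 h00 h01).mean v = ((a0 v : ℤ) : ℝ) := by
      intro v
      rw [mean_eq (mixModel G q0 h00 h01) q0 v (fun g => rfl)]
      exact delta_sum a0 _
    have hcorr : ∀ e ∈ G.edgeFinset, (mixModel G q0 h00 h01).corrE e
        = ((edgeTerm a0 e : ℤ) : ℝ) := by
      intro e he
      rw [corrE_eq (mixModel G q0 h00 h01) q0 e (fun g => rfl)
        (G.not_isDiag_of_mem_edgeSet (SimpleGraph.mem_edgeFinset.mp he))]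
      exact delta_sum a0 _
    have hA : ∑ v, α v * (mixModel G q0 h00 h01).mean v = ∑ v, α v * ((a0 v : ℤ) : ℝ) :=
      Finset.sum_congr rfl fun v _ => by rw [hmean v]
    have hB : ∑ e ∈ G.edgeFinset, β e * (mixModel G q0 h00 h01).corrE e
        = ∑ e ∈ G.edgeFinset, β e * ((edgeTerm a0 e : ℤ) : ℝ) :=
      Finset.sum_congr rfl fun e he => by rw [hcorr e he]
    rw [hA, hB, hE]
  · -- upper bound
    rintro x ⟨M, rfl⟩
    obtain ⟨q, hq0', hq1', hqm⟩ :=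
      exists_joint hG M Finset.univ.card Finset.univ le_rfl
    have hmean : ∀ v, M.mean v = ∑ a : V → Sgn, q a * ((a v : ℤ) : ℝ) := fun v =>
      mean_eq M q v (fun g => hqm {v} (Finset.subset_univ _) (singleton_clique v) g)
    have hcorr : ∀ e ∈ G.edgeFinset,
        M.corrE e = ∑ a : V → Sgn, q a * ((edgeTerm a e : ℤ) : ℝ) := fun e he =>
      corrE_eq M q e (fun g => hqm (pairFinset e) (Finset.subset_univ _) (pair_clique he) g)
        (G.not_isDiag_of_mem_edgeSet (SimpleGraph.mem_edgeFinset.mp he))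
    have h1 : ∑ v, α v * M.mean v
        = ∑ a : V → Sgn, q a * ∑ v, α v * ((a v : ℤ) : ℝ) := by
      have hA : ∑ v, α v * M.mean v
          = ∑ v, ∑ a : V → Sgn, α v * (q a * ((a v : ℤ) : ℝ)) :=
        Finset.sum_congr rfl fun v _ => by rw [hmean v, Finset.mul_sum]
      rw [hA, Finset.sum_comm]
      refine Finset.sum_congr rfl fun a _ => ?_
      rw [Finset.mul_sum]
      exact Finset.sum_congr rfl fun v _ => by ring
    have h2 : ∑ e ∈ G.edgeFinset, β e * M.corrE e
        = ∑ a : V → Sgn, q a * ∑ e ∈ G.edgeFinset, β e * ((edgeTerm a e : ℤ) : ℝ) := by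
      have hB : ∑ e ∈ G.edgeFinset, β e * M.corrE e
          = ∑ e ∈ G.edgeFinset, ∑ a : V → Sgn, β e * (q a * ((edgeTerm a e : ℤ) : ℝ)) :=
        Finset.sum_congr rfl fun e he => by rw [hcorr e he, Finset.mul_sum]
      rw [hB, Finset.sum_comm]
      refine Finset.sum_congr rfl fun a _ => ?_
      rw [Finset.mul_sum]
      exact Finset.sum_congr rfl fun e _ => by ring
    rw [h1, h2, ← Finset.sum_add_distrib]
    have hstep : ∀ a : V → Sgn,
        q a * (∑ v, α v * ((a v : ℤ) : ℝ))
          + q a * (∑ e ∈ G.edgeFinset, β e * ((edgeTerm a e : ℤ) : ℝ))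
        = q a * E a := by
      intro a
      rw [hE]
      ring
    rw [Finset.sum_congr rfl (fun a _ => hstep a)]
    calc ∑ a : V → Sgn, q a * E a
        ≤ ∑ a : V → Sgn, q a * Finset.univ.sup' Finset.univ_nonempty E :=
          Finset.sum_le_sum fun a _ => mul_le_mul_of_nonneg_left
            (Finset.le_sup' E (Finset.mem_univ a)) (hq0' a)
      _ = Finset.univ.sup' Finset.univ_nonempty E := by
          rw [← Finset.sum_mul, hq1', one_mul]
end
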